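/- arXiv:math-ph/0008002 — 5 statements merged into one kernel-verified Lean document; each statement's English description precedes it below -/
import Mathlib

section
/- Let $\mu : \mathbb{R} \to [0,\infty)$ be integrable on $(-\infty, A]$ for every $A$, and let $\mu_1(\xi) := \int_{-\infty}^{\xi} \mu(s)\,ds$. Define the operator $W$ on nonnegative measurable functions by $(Wm)(\xi,\eta) := \int_{-\infty}^{\xi} ds \int_0^{\eta} dt\, \mu(s+t)\, m(s,t)$. Then for every $n \geq 1$, $(W^n 1)(\xi,\eta) \leq \frac{\eta^n}{n!} \frac{\mu_1(\xi+\eta)^n}{n!}$. -/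
open MeasureTheory

namespace Stmt6Aux

open Set


variable {μ : ℝ → ℝ} {μ1 : ℝ → ℝ}

lemma aesm (hint : ∀ A : ℝ, IntegrableOn μ (Set.Iic A)) :
    AEStronglyMeasurable μ (volume : Measure ℝ) := by
  have h : (⋃ n : ℕ, Set.Iic (n : ℝ)) = Set.univ := by
    ext x
    simp only [Set.mem_iUnion, Set.mem_Iic, Set.mem_univ, iff_true]
    exact exists_nat_ge x
  have h2 := aestronglyMeasurable_iUnion_iff.mpr
    (fun n : ℕ => (hint (n : ℝ)).aestronglyMeasurable)
  rwa [h, Measure.restrict_univ] at h2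

lemma mono1 (hμ : ∀ x, 0 ≤ μ x) (hint : ∀ A : ℝ, IntegrableOn μ (Set.Iic A))
    (hμ1 : ∀ ξ, μ1 ξ = ∫ s in Set.Iic ξ, μ s) : Monotone μ1 := by
  intro a b hab
  rw [hμ1 a, hμ1 b]
  exact setIntegral_mono_set (hint b) (Filter.Eventually.of_forall hμ)
    (HasSubset.Subset.eventuallyLE (Iic_subset_Iic.mpr hab))

lemma nonneg1 (hμ : ∀ x, 0 ≤ μ x)
    (hμ1 : ∀ ξ, μ1 ξ = ∫ s in Set.Iic ξ, μ s) (ξ : ℝ) : 0 ≤ μ1 ξ := by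
  rw [hμ1]
  exact setIntegral_nonneg measurableSet_Iic fun x _ => hμ x

lemma intpsi (hμ : ∀ x, 0 ≤ μ x) (hint : ∀ A : ℝ, IntegrableOn μ (Set.Iic A))
    (hμ1 : ∀ ξ, μ1 ξ = ∫ s in Set.Iic ξ, μ s) (n : ℕ) (B : ℝ) :
    IntegrableOn (fun u => μ u * μ1 u ^ n) (Set.Iic B) := by
  have hb : Integrable (fun u => μ u * μ1 B ^ n) (volume.restrict (Set.Iic B)) :=
    (hint B).mul_const _
  refine hb.mono' ((aesm hint).restrict.mul
    (((mono1 hμ hint hμ1).measurable.pow_const n).aestronglyMeasurable)) ?_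
  rw [ae_restrict_iff' measurableSet_Iic]
  refine Filter.Eventually.of_forall fun u hu => ?_
  have h1 : 0 ≤ μ1 u := nonneg1 hμ hμ1 u
  rw [Real.norm_eq_abs, abs_of_nonneg (mul_nonneg (hμ u) (pow_nonneg h1 n))]
  exact mul_le_mul_of_nonneg_left
    (pow_le_pow_left₀ h1 (mono1 hμ hint hμ1 hu) n) (hμ u)

lemma shift_integral (f : ℝ → ℝ) (t B : ℝ) :
    ∫ s in Set.Iic B, f (s + t) = ∫ u in Set.Iic (B + t), f u := by
  have hpre : (fun s : ℝ => s + t) ⁻¹' Set.Iic (B + t) = Set.Iic B := by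
    ext x; simp [add_le_add_iff_right]
  have h := (measurePreserving_add_right (volume : Measure ℝ) t).setIntegral_preimage_emb
    (measurableEmbedding_addRight t) f (Set.Iic (B + t))
  rwa [hpre] at h

lemma shift_integrable {f : ℝ → ℝ} {t B : ℝ} (h : IntegrableOn f (Set.Iic (B + t))) :
    IntegrableOn (fun s => f (s + t)) (Set.Iic B) := by
  have hpre : (fun s : ℝ => s + t) ⁻¹' Set.Iic (B + t) = Set.Iic B := by
    ext x; simp [add_le_add_iff_right]
  have h2 := ((measurePreserving_add_right (volume : Measure ℝ) t).integrableOn_comp_preimage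
    (measurableEmbedding_addRight t) (f := f) (s := Set.Iic (B + t))).mpr h
  rwa [hpre] at h2


lemma key (hμ : ∀ x, 0 ≤ μ x) (hint : ∀ A : ℝ, IntegrableOn μ (Set.Iic A))
    (hμ1 : ∀ ξ, μ1 ξ = ∫ s in Set.Iic ξ, μ s) :
    ∀ (n : ℕ) (A : ℝ),
      ∫ u in Set.Iic A, μ u * μ1 u ^ n = μ1 A ^ (n + 1) / (n + 1) := by
  intro n
  induction n with
  | zero => intro A; simp [hμ1 A]
  | succ n IH =>
    intro A
    set ψ : ℝ → ℝ := fun u => μ u * μ1 u ^ n with hψdef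
    have hψint : ∀ B : ℝ, IntegrableOn ψ (Set.Iic B) := intpsi hμ hint hμ1 n
    have hψ0 : ∀ u, 0 ≤ ψ u := fun u =>
      mul_nonneg (hμ u) (pow_nonneg (nonneg1 hμ hμ1 u) n)
    set G : ℝ × ℝ → ℝ :=
      fun p => Set.indicator {q : ℝ × ℝ | q.2 ≤ q.1} (fun q => μ q.2 * ψ q.1) p with hGdef
    set ρ : Measure (ℝ × ℝ) :=
      (volume.restrict (Set.Iic A)).prod (volume.restrict (Set.Iic A)) with hρdef
    have hsetm : MeasurableSet {q : ℝ × ℝ | q.2 ≤ q.1} :=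
      measurableSet_le measurable_snd measurable_fst
    have hψm : AEStronglyMeasurable ψ (volume : Measure ℝ) :=
      (aesm hint).mul
        (((mono1 hμ hint hμ1).measurable.pow_const n).aestronglyMeasurable)
    have hGaesm : AEStronglyMeasurable G ρ := by
      refine AEStronglyMeasurable.indicator ?_ hsetm
      exact (((aesm hint).mono_measure Measure.restrict_le_self).comp_snd).mul
        ((hψm.mono_measure Measure.restrict_le_self).comp_fst)
    have hGint : Integrable G ρ := by
      have hbdd : Integrable (fun p : ℝ × ℝ => (μ1 A ^ n * μ p.1) * μ p.2) ρ := by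
        exact (((hint A).const_mul _).mul_prod (hint A))
      refine hbdd.mono' hGaesm ?_
      rw [hρdef, Measure.prod_restrict,
        ae_restrict_iff' (measurableSet_Iic.prod measurableSet_Iic)]
      refine Filter.Eventually.of_forall fun p hp => ?_
      rcases hp with ⟨hp1, hp2⟩
      by_cases hmem : p ∈ {q : ℝ × ℝ | q.2 ≤ q.1}
      · rw [hGdef]
        simp only [Set.indicator_of_mem hmem]
        rw [Real.norm_eq_abs, abs_of_nonneg (mul_nonneg (hμ _) (hψ0 _))]
        have : ψ p.1 ≤ μ1 A ^ n * μ p.1 := by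
          rw [hψdef]
          calc μ p.1 * μ1 p.1 ^ n ≤ μ p.1 * μ1 A ^ n :=
                mul_le_mul_of_nonneg_left
                  (pow_le_pow_left₀ (nonneg1 hμ hμ1 _) (mono1 hμ hint hμ1 hp1) n) (hμ _)
            _ = μ1 A ^ n * μ p.1 := mul_comm _ _
        calc μ p.2 * ψ p.1 ≤ μ p.2 * (μ1 A ^ n * μ p.1) :=
              mul_le_mul_of_nonneg_left this (hμ _)
          _ = μ1 A ^ n * μ p.1 * μ p.2 := by ring
      · rw [hGdef]
        simp only [Set.indicator_of_notMem hmem]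
        simp only [norm_zero]
        exact mul_nonneg (mul_nonneg (pow_nonneg (nonneg1 hμ hμ1 _) n) (hμ _)) (hμ _)
    -- step 1 : J = iterated integral of G
    have step1 : ∫ u in Set.Iic A, μ u * μ1 u ^ (n + 1)
        = ∫ u in Set.Iic A, ∫ v in Set.Iic A, G (u, v) := by
      refine setIntegral_congr_fun measurableSet_Iic fun u hu => ?_
      have heq : ∀ v : ℝ, G (u, v) = Set.indicator (Set.Iic u) (fun v => μ v * ψ u) v := by
        intro v
        simp only [hGdef, Set.indicator_apply, Set.mem_setOf_eq, Set.mem_Iic]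
      calc μ u * μ1 u ^ (n + 1) = μ1 u * ψ u := by rw [hψdef]; ring
        _ = (∫ v in Set.Iic u, μ v) * ψ u := by rw [hμ1]
        _ = ∫ v in Set.Iic u, μ v * ψ u := (integral_mul_const _ _).symm
        _ = ∫ v in Set.Iic A ∩ Set.Iic u, μ v * ψ u := by
            rw [Set.inter_eq_self_of_subset_right (Iic_subset_Iic.mpr hu)]
        _ = ∫ v in Set.Iic A, Set.indicator (Set.Iic u) (fun v => μ v * ψ u) v := by
            rw [setIntegral_indicator measurableSet_Iic]
        _ = ∫ v in Set.Iic A, G (u, v) := by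
            exact integral_congr_ae (Filter.Eventually.of_forall fun v => (heq v).symm)
    -- step 2 : swap
    have step2 : ∫ u in Set.Iic A, ∫ v in Set.Iic A, G (u, v)
        = ∫ v in Set.Iic A, ∫ u in Set.Iic A, G (u, v) :=
      integral_integral_swap hGint
    -- step 3 : inner integral after swap
    have step3 : ∀ v ∈ Set.Iic A,
        (∫ u in Set.Iic A, G (u, v))
          = μ v * (μ1 A ^ (n + 1) / (n + 1)) - μ v * μ1 v ^ (n + 1) / (n + 1) := by
      intro v hv
      have heq : ∀ u : ℝ, G (u, v) = Set.indicator (Set.Ici v) (fun u => μ v * ψ u) u := by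
        intro u
        simp only [hGdef, Set.indicator_apply, Set.mem_setOf_eq, Set.mem_Ici]
      have hsplit : (∫ u in Set.Iic v, ψ u) + ∫ u in Set.Ioc v A, ψ u
          = ∫ u in Set.Iic A, ψ u := by
        rw [← setIntegral_union (Set.Iic_disjoint_Ioc le_rfl) measurableSet_Ioc
          (hψint v) ((hψint A).mono_set Ioc_subset_Iic_self), Set.Iic_union_Ioc_eq_Iic hv]
      calc (∫ u in Set.Iic A, G (u, v))
          = ∫ u in Set.Iic A, Set.indicator (Set.Ici v) (fun u => μ v * ψ u) u :=
            integral_congr_ae (Filter.Eventually.of_forall fun u => heq u)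
        _ = ∫ u in Set.Iic A ∩ Set.Ici v, μ v * ψ u := by
            rw [setIntegral_indicator measurableSet_Ici]
        _ = ∫ u in Set.Icc v A, μ v * ψ u := by rw [Set.Iic_inter_Ici]
        _ = ∫ u in Set.Ioc v A, μ v * ψ u := by
            rw [integral_Icc_eq_integral_Ioc]
        _ = μ v * ∫ u in Set.Ioc v A, ψ u := integral_const_mul _ _
        _ = μ v * ((∫ u in Set.Iic A, ψ u) - ∫ u in Set.Iic v, ψ u) := by
            rw [← hsplit]; ring
        _ = μ v * (μ1 A ^ (n + 1) / (n + 1)) - μ v * μ1 v ^ (n + 1) / (n + 1) := by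
            rw [IH A, IH v]; ring
    -- step 4 : the linear equation
    have hi1 : Integrable (fun v => μ v * (μ1 A ^ (n + 1) / ((n : ℝ) + 1)))
        (volume.restrict (Set.Iic A)) := (hint A).mul_const _
    have hi2 : Integrable (fun v => μ v * μ1 v ^ (n + 1) / ((n : ℝ) + 1))
        (volume.restrict (Set.Iic A)) :=
      (intpsi hμ hint hμ1 (n + 1) A).div_const _
    have hJeq : ∫ u in Set.Iic A, μ u * μ1 u ^ (n + 1)
        = μ1 A * (μ1 A ^ (n + 1) / ((n : ℝ) + 1))
          - (∫ u in Set.Iic A, μ u * μ1 u ^ (n + 1)) / ((n : ℝ) + 1) := by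
      calc ∫ u in Set.Iic A, μ u * μ1 u ^ (n + 1)
          = ∫ v in Set.Iic A, ∫ u in Set.Iic A, G (u, v) := by rw [step1, step2]
        _ = ∫ v in Set.Iic A,
              (μ v * (μ1 A ^ (n + 1) / ((n : ℝ) + 1)) - μ v * μ1 v ^ (n + 1) / ((n : ℝ) + 1)) :=
            setIntegral_congr_fun measurableSet_Iic step3
        _ = (∫ v in Set.Iic A, μ v * (μ1 A ^ (n + 1) / ((n : ℝ) + 1)))
              - ∫ v in Set.Iic A, μ v * μ1 v ^ (n + 1) / ((n : ℝ) + 1) :=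
            integral_sub hi1 hi2
        _ = μ1 A * (μ1 A ^ (n + 1) / ((n : ℝ) + 1))
              - (∫ u in Set.Iic A, μ u * μ1 u ^ (n + 1)) / ((n : ℝ) + 1) := by
            rw [integral_mul_const, integral_div, ← hμ1 A]
    have hcast : ((n : ℝ) + 1 + 1) = (n : ℝ) + 2 := by ring
    have hn1 : ((n : ℝ) + 1) ≠ 0 := by positivity
    have hn2 : ((n : ℝ) + 2) ≠ 0 := by positivity
    have hpow : μ1 A * μ1 A ^ (n + 1) = μ1 A ^ (n + 2) := (pow_succ' _ _).symm
    push_cast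
    rw [hcast]
    field_simp at hJeq
    field_simp
    nlinarith [hJeq, hpow]

end Stmt6Aux

open Stmt6Aux in
/-- Iterated bound for the Volterra-type operator
`(Wm)(ξ,η) = ∫_{-∞}^{ξ} ds ∫_0^η dt μ(s+t) m(s,t)`:
for all `n ≥ 1`, `(Wⁿ1)(ξ,η) ≤ (ηⁿ/n!) (μ₁(ξ+η)ⁿ/n!)` where `μ₁(ξ) = ∫_{-∞}^ξ μ`. -/
theorem stmt_6 (μ : ℝ → ℝ) (hμ : ∀ x, 0 ≤ μ x)
    (hint : ∀ A : ℝ, IntegrableOn μ (Set.Iic A))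
    (μ1 : ℝ → ℝ) (hμ1 : ∀ ξ, μ1 ξ = ∫ s in Set.Iic ξ, μ s)
    (W : (ℝ → ℝ → ℝ) → (ℝ → ℝ → ℝ))
    (hW : ∀ m ξ η, W m ξ η = ∫ s in Set.Iic ξ, ∫ t in (0 : ℝ)..η, μ (s + t) * m s t) :
    ∀ n : ℕ, 1 ≤ n → ∀ ξ η : ℝ, 0 ≤ η →
      (W^[n] (fun _ _ => 1)) ξ η
        ≤ η ^ n / (Nat.factorial n) * (μ1 (ξ + η)) ^ n / (Nat.factorial n) := by

  have hkey := key hμ hint hμ1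
  have hmono := mono1 hμ hint hμ1
  have h10 := nonneg1 hμ hμ1
  have claim : ∀ n : ℕ, ∀ ξ η : ℝ, 0 ≤ η →
      0 ≤ (W^[n] (fun _ _ => 1)) ξ η ∧
      (W^[n] (fun _ _ => 1)) ξ η
        ≤ η ^ n / (Nat.factorial n) * (μ1 (ξ + η)) ^ n / (Nat.factorial n) := by
    intro n
    induction n with
    | zero => intro ξ η hη; constructor <;> simp
    | succ n IH =>
      intro ξ η hη
      rw [Function.iterate_succ_apply', hW]
      set m : ℝ → ℝ → ℝ := W^[n] (fun _ _ => 1) with hm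
      set ψ : ℝ → ℝ := fun u => μ u * μ1 u ^ n with hψdef
      have hψint : ∀ B : ℝ, IntegrableOn ψ (Set.Iic B) := intpsi hμ hint hμ1 n
      have hψ0 : ∀ u, 0 ≤ ψ u := fun u =>
        mul_nonneg (hμ u) (pow_nonneg (h10 u) n)
      have hψm : AEStronglyMeasurable ψ (volume : Measure ℝ) :=
        (aesm hint).mul ((hmono.measurable.pow_const n).aestronglyMeasurable)
      have hfact : (0 : ℝ) < (Nat.factorial n : ℝ) :=
        Nat.cast_pos.mpr (Nat.factorial_pos n)
      set c : ℝ → ℝ := fun t => t ^ n / (Nat.factorial n : ℝ) / (Nat.factorial n : ℝ)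
        with hcdef
      have hcont_c : Continuous c := by
        rw [hcdef]; exact ((continuous_pow n).div_const _).div_const _
      have hc0 : ∀ t : ℝ, 0 ≤ t → 0 ≤ c t := fun t ht => by
        rw [hcdef]; positivity
      have hcle : ∀ t ∈ Set.Ioc (0 : ℝ) η, c t ≤ c η := fun t ht => by
        have h := pow_le_pow_left₀ ht.1.le ht.2 n
        simp only [hcdef]
        gcongr
      -- nonnegativity of inner integral
      have hg0 : ∀ s : ℝ, 0 ≤ ∫ t in (0:ℝ)..η, μ (s + t) * m s t := fun s =>
        intervalIntegral.integral_nonneg hη fun t ht => mul_nonneg (hμ _) ((IH s t ht.1).1)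
      constructor
      · exact setIntegral_nonneg measurableSet_Iic fun s _ => hg0 s
      -- integrability of the shifted ψ
      have hshift : ∀ s : ℝ, IntegrableOn (fun t => ψ (s + t)) (Set.Iic η) := by
        intro s
        have h1 : IntegrableOn (fun t => ψ (t + s)) (Set.Iic η) :=
          shift_integrable (hψint (η + s))
        have h2 : (fun t => ψ (s + t)) = fun t => ψ (t + s) := by
          funext t; rw [add_comm]
        rw [h2]; exact h1
      have hbase : ∀ s : ℝ, IntegrableOn (fun t => ψ (s + t)) (Set.Ioc 0 η) := fun s =>
        (hshift s).mono_set Set.Ioc_subset_Iic_self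
      have hboundInt : ∀ s : ℝ,
          Integrable (fun t => c t * ψ (s + t)) (volume.restrict (Set.Ioc 0 η)) := by
        intro s
        have haesm : AEStronglyMeasurable (fun t => c t * ψ (s + t))
            (volume.restrict (Set.Ioc 0 η)) :=
          hcont_c.aestronglyMeasurable.restrict.mul (hbase s).aestronglyMeasurable
        refine ((hbase s).const_mul (c η)).mono' haesm ?_
        rw [ae_restrict_iff' measurableSet_Ioc]
        refine Filter.Eventually.of_forall fun t ht => ?_
        rw [Real.norm_eq_abs, abs_of_nonneg (mul_nonneg (hc0 t ht.1.le) (hψ0 _))]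
        exact mul_le_mul_of_nonneg_right (hcle t ht) (hψ0 _)
      -- pointwise comparison of inner integrals
      have hgh : ∀ s : ℝ, (∫ t in (0:ℝ)..η, μ (s + t) * m s t)
          ≤ ∫ t in Set.Ioc (0:ℝ) η, c t * ψ (s + t) := by
        intro s
        rw [intervalIntegral.integral_of_le hη]
        refine integral_mono_of_nonneg ?_ (hboundInt s) ?_
        · filter_upwards [ae_restrict_mem measurableSet_Ioc] with t ht
          exact mul_nonneg (hμ _) ((IH s t ht.1.le).1)
        · filter_upwards [ae_restrict_mem measurableSet_Ioc] with t ht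
          calc μ (s + t) * m s t
              ≤ μ (s + t) * (t ^ n / (Nat.factorial n : ℝ) * μ1 (s + t) ^ n
                  / (Nat.factorial n : ℝ)) :=
                mul_le_mul_of_nonneg_left ((IH s t ht.1.le).2) (hμ _)
            _ = c t * ψ (s + t) := by rw [hcdef, hψdef]; ring
      -- product integrability
      set ρ : Measure (ℝ × ℝ) :=
        (volume.restrict (Set.Iic ξ)).prod (volume.restrict (Set.Ioc (0:ℝ) η)) with hρdef
      set F : ℝ × ℝ → ℝ := fun p => c p.2 * ψ (p.1 + p.2) with hFdef
      have hρle : ρ ≤ (volume : Measure ℝ).prod volume := by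
        rw [hρdef, Measure.prod_restrict]
        exact Measure.restrict_le_self
      have qmp : Measure.QuasiMeasurePreserving (fun p : ℝ × ℝ => p.1 + p.2) ρ volume := by
        have q1 : Measure.QuasiMeasurePreserving (fun p : ℝ × ℝ => p.1 + p.2)
            ((volume : Measure ℝ).prod volume) volume := by
          have h1 := (measurePreserving_prod_add (volume : Measure ℝ)
            volume).quasiMeasurePreserving
          exact (MeasureTheory.Measure.quasiMeasurePreserving_snd
            (μ := (volume : Measure ℝ)) (ν := (volume : Measure ℝ))).comp h1
        exact ⟨measurable_add, (Measure.absolutelyContinuous_of_le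
          (Measure.map_mono hρle measurable_add)).trans q1.absolutelyContinuous⟩
      have hFaesm : AEStronglyMeasurable F ρ :=
        ((hcont_c.comp continuous_snd).aestronglyMeasurable).mul
          (hψm.comp_quasiMeasurePreserving qmp)
      have hslice : ∀ t : ℝ, Integrable (fun s => c t * ψ (s + t))
          (volume.restrict (Set.Iic ξ)) := fun t =>
        (shift_integrable (hψint (ξ + t))).const_mul _
      have hinner : ∀ t : ℝ, (∫ s in Set.Iic ξ, c t * ψ (s + t))
          = c t * (μ1 (ξ + t) ^ (n + 1) / ((n : ℝ) + 1)) := by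
        intro t
        rw [integral_const_mul, shift_integral ψ t ξ, hkey n (ξ + t)]
      have hFint : Integrable F ρ := by
        rw [hρdef]
        refine (integrable_prod_iff' hFaesm).mpr ⟨?_, ?_⟩
        · exact Filter.Eventually.of_forall fun t => hslice t
        · have hnaesm : AEStronglyMeasurable
              (fun t => ∫ s in Set.Iic ξ, ‖F (s, t)‖) (volume.restrict (Set.Ioc (0:ℝ) η)) :=
            (hFaesm.norm.prod_swap).integral_prod_right'
          have hconst : IntegrableOn
              (fun _ : ℝ => c η * (μ1 (ξ + η) ^ (n + 1) / ((n : ℝ) + 1)))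
              (Set.Ioc (0:ℝ) η) volume :=
            integrableOn_const measure_Ioc_lt_top.ne
          refine hconst.mono' hnaesm ?_
          rw [ae_restrict_iff' measurableSet_Ioc]
          refine Filter.Eventually.of_forall fun t ht => ?_
          have hval : (∫ s in Set.Iic ξ, ‖F (s, t)‖)
              = c t * (μ1 (ξ + t) ^ (n + 1) / ((n : ℝ) + 1)) := by
            have heq : ∀ s : ℝ, ‖F (s, t)‖ = c t * ψ (s + t) := fun s => by
              rw [hFdef, Real.norm_eq_abs,
                abs_of_nonneg (mul_nonneg (hc0 t ht.1.le) (hψ0 _))]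
            rw [integral_congr_ae (Filter.Eventually.of_forall heq), hinner t]
          rw [Real.norm_eq_abs, hval, abs_of_nonneg (mul_nonneg (hc0 t ht.1.le)
            (div_nonneg (pow_nonneg (h10 _) _) (by positivity)))]
          have hμle : μ1 (ξ + t) ^ (n + 1) / ((n : ℝ) + 1)
              ≤ μ1 (ξ + η) ^ (n + 1) / ((n : ℝ) + 1) := by
            gcongr
            · exact h10 _
            · exact hmono (by linarith [ht.2])
          exact mul_le_mul (hcle t ht) hμle (div_nonneg (pow_nonneg (h10 _) _)
            (by positivity)) (hc0 η hη)
      -- conclusion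
      have hfne : (Nat.factorial n : ℝ) ≠ 0 := ne_of_gt hfact
      have hn1 : ((n : ℝ) + 1) ≠ 0 := by positivity
      have hmarg : Integrable (fun s => ∫ t in Set.Ioc (0:ℝ) η, c t * ψ (s + t))
          (volume.restrict (Set.Iic ξ)) := hFint.integral_prod_left
      calc (∫ s in Set.Iic ξ, ∫ t in (0:ℝ)..η, μ (s + t) * m s t)
          ≤ ∫ s in Set.Iic ξ, ∫ t in Set.Ioc (0:ℝ) η, c t * ψ (s + t) :=
            integral_mono_of_nonneg (Filter.Eventually.of_forall hg0)
              hmarg (Filter.Eventually.of_forall hgh)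
        _ = ∫ t in Set.Ioc (0:ℝ) η, ∫ s in Set.Iic ξ, c t * ψ (s + t) :=
            integral_integral_swap hFint
        _ = ∫ t in Set.Ioc (0:ℝ) η, c t * (μ1 (ξ + t) ^ (n + 1) / ((n : ℝ) + 1)) :=
            integral_congr_ae (Filter.Eventually.of_forall fun t => hinner t)
        _ ≤ ∫ t in Set.Ioc (0:ℝ) η, c t * (μ1 (ξ + η) ^ (n + 1) / ((n : ℝ) + 1)) := by
            refine integral_mono_of_nonneg ?_
              ((hcont_c.integrableOn_Ioc).mul_const _) ?_
            · filter_upwards [ae_restrict_mem measurableSet_Ioc] with t ht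
              exact mul_nonneg (hc0 t ht.1.le)
                (div_nonneg (pow_nonneg (h10 _) _) (by positivity))
            · filter_upwards [ae_restrict_mem measurableSet_Ioc] with t ht
              refine mul_le_mul_of_nonneg_left ?_ (hc0 t ht.1.le)
              gcongr
              · exact h10 _
              · exact hmono (by linarith [ht.2])
        _ = (∫ t in Set.Ioc (0:ℝ) η, c t) * (μ1 (ξ + η) ^ (n + 1) / ((n : ℝ) + 1)) :=
            integral_mul_const _ _
        _ ≤ η ^ (n + 1) / (Nat.factorial (n + 1) : ℝ) * μ1 (ξ + η) ^ (n + 1)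
              / (Nat.factorial (n + 1) : ℝ) := by
            have hc_int : (∫ t in Set.Ioc (0:ℝ) η, c t)
                = η ^ (n + 1) / ((n : ℝ) + 1) / (Nat.factorial n : ℝ)
                  / (Nat.factorial n : ℝ) := by
              rw [← intervalIntegral.integral_of_le hη]
              simp only [hcdef]
              rw [intervalIntegral.integral_div, intervalIntegral.integral_div, integral_pow]
              ring
            rw [hc_int]
            apply le_of_eq
            rw [Nat.factorial_succ]
            push_cast
            field_simp
  intro n _ ξ η hη
  exact (claim n ξ η hη).2
end

section
/- If $m(\xi,\eta) \geq 0$ satisfies $m \leq 1 + Wm$ pointwise, where $(Wm)(\xi,\eta) = \int_{-\infty}^{\xi} ds \int_0^{\eta} dt\, \mu(s+t) m(s,t)$ with $\mu \geq 0$ locally integrable, and the iteration converges, then $m(\xi,\eta) \leq 1 + \sum_{n=1}^{\infty} \frac{\eta^n \mu_1(\xi+\eta)^n}{(n!)^2}$ where $\mu_1(\xi) = \int_{-\infty}^{\xi} \mu(s)\,ds$. -/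
open MeasureTheory

open Set Filter

noncomputable def pr (g : ℝ → ℝ) (x : ℝ) : ℝ := ∫ s in Set.Iic x, g s

section
variable {g : ℝ → ℝ} (hgm : Measurable g) (hg0 : ∀ x, 0 ≤ g x)
  (hgi : ∀ A : ℝ, IntegrableOn g (Set.Iic A))

theorem split_Iic {F : ℝ → ℝ} (hFi : ∀ A : ℝ, IntegrableOn F (Set.Iic A)) {a b : ℝ}
    (hab : a ≤ b) : ∫ u in Iic b, F u = (∫ u in Iic a, F u) + ∫ u in Ioc a b, F u := by
  rw [← setIntegral_union (Iic_disjoint_Ioc le_rfl) measurableSet_Ioc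
      ((hFi b).mono_set (Iic_subset_Iic.mpr hab)) ((hFi b).mono_set Ioc_subset_Iic_self),
    Iic_union_Ioc_eq_Iic hab]

include hg0 hgi in
theorem pr_mono : Monotone (pr g) := by
  intro a b hab
  simp only [pr, split_Iic hgi hab]
  have : 0 ≤ ∫ u in Ioc a b, g u := setIntegral_nonneg measurableSet_Ioc fun x _ => hg0 x
  linarith

include hg0 in
theorem pr_nonneg (x : ℝ) : 0 ≤ pr g x :=
  setIntegral_nonneg measurableSet_Iic fun x _ => hg0 x

omit hgm in
include hg0 hgi in
theorem pr_measurable : Measurable (pr g) := (pr_mono hg0 hgi).measurable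

include hgm hg0 hgi in
theorem Fk_integrableOn (k : ℕ) (A : ℝ) :
    IntegrableOn (fun u => g u * (pr g u) ^ k) (Iic A) := by
  refine Integrable.mono' ((hgi A).const_mul ((pr g A) ^ k))
    ((hgm.mul ((pr_measurable hg0 hgi).pow_const k)).aestronglyMeasurable.restrict) ?_
  filter_upwards [ae_restrict_mem measurableSet_Iic] with u hu
  have h1 : 0 ≤ pr g u := pr_nonneg hg0 u
  have h2 : pr g u ≤ pr g A := pr_mono hg0 hgi hu
  rw [Real.norm_eq_abs, abs_of_nonneg (mul_nonneg (hg0 u) (pow_nonneg h1 k)), mul_comm]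
  exact mul_le_mul_of_nonneg_right (pow_le_pow_left₀ h1 h2 k) (hg0 u)

include hgm hg0 hgi in
theorem Jident (k : ℕ) (A : ℝ) :
    ∫ u in Iic A, g u * (pr g u) ^ k = (pr g A) ^ (k + 1) / (k + 1) := by
  induction k generalizing A with
  | zero => simp [pr]
  | succ k ih =>
    set c := pr g A with hc
    set F : ℝ → ℝ := fun u => g u * (pr g u) ^ k with hF
    have hFmeas : Measurable F := hgm.mul ((pr_measurable hg0 hgi).pow_const k)
    have hprm := pr_measurable hg0 hgi
    set H : ℝ → ℝ → ℝ := fun u v => (Iic A).indicator F u * (Iic u).indicator g v with hH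
    have hHm : Measurable (fun p : ℝ × ℝ => H p.1 p.2) := by
      apply Measurable.mul
      · exact ((hFmeas.indicator measurableSet_Iic)).comp measurable_fst
      · have : (fun p : ℝ × ℝ => (Iic p.1).indicator g p.2)
            = fun p : ℝ × ℝ => if p.2 ≤ p.1 then g p.2 else 0 := by
          funext p
          by_cases h : p.2 ≤ p.1 <;> simp [indicator, h]
        rw [this]
        exact Measurable.ite (measurableSet_le measurable_snd measurable_fst)
          (hgm.comp measurable_snd) measurable_const
    have hHi : Integrable (fun p : ℝ × ℝ => H p.1 p.2) ((volume : Measure ℝ).prod volume) := by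
      have hD : Integrable (fun p : ℝ × ℝ =>
          ((Iic A).indicator (fun u => g u * c ^ k) p.1) * ((Iic A).indicator g p.2))
          ((volume : Measure ℝ).prod volume) := by
        apply Integrable.mul_prod
        · rw [integrable_indicator_iff measurableSet_Iic]
          exact (hgi A).mul_const _
        · rw [integrable_indicator_iff measurableSet_Iic]; exact hgi A
      refine hD.mono' hHm.aestronglyMeasurable (Filter.Eventually.of_forall fun p => ?_)
      rcases p with ⟨u, v⟩
      by_cases h1 : u ≤ A
      · by_cases h2 : v ≤ u
        · have hvA : v ≤ A := le_trans h2 h1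
          simp only [H, indicator, mem_Iic, h1, h2, hvA, if_true]
          rw [Real.norm_eq_abs, abs_of_nonneg (mul_nonneg
            (mul_nonneg (hg0 u) (pow_nonneg (pr_nonneg hg0 u) k)) (hg0 v))]
          exact mul_le_mul_of_nonneg_right (mul_le_mul_of_nonneg_left
            (pow_le_pow_left₀ (pr_nonneg hg0 u) (pr_mono hg0 hgi h1) k) (hg0 u)) (hg0 v)
        · simp only [H, hF, indicator, mem_Iic, h2, if_false, mul_zero, norm_zero]
          split_ifs <;>
            nlinarith [hg0 u, hg0 v, pow_nonneg (pr_nonneg hg0 A) k,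
              mul_nonneg (hg0 u) (pow_nonneg (pr_nonneg hg0 A) k),
              mul_nonneg (mul_nonneg (hg0 u) (pow_nonneg (pr_nonneg hg0 A) k)) (hg0 v)]
      · simp only [H, indicator, mem_Iic, h1, if_false, zero_mul, norm_zero]
        first
        | exact le_refl 0
        | split_ifs <;>
            nlinarith [hg0 u, hg0 v, pow_nonneg (pr_nonneg hg0 A) k,
              mul_nonneg (hg0 u) (pow_nonneg (pr_nonneg hg0 A) k),
              mul_nonneg (mul_nonneg (hg0 u) (pow_nonneg (pr_nonneg hg0 A) k)) (hg0 v)]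
    -- Step 2: LHS as a double integral
    have inner1 : ∀ u : ℝ, (∫ v, H u v) = (Iic A).indicator (fun u => g u * pr g u ^ (k+1)) u := by
      intro u
      have : (∫ v, H u v) = (Iic A).indicator F u * pr g u := by
        simp only [hH]
        rw [integral_const_mul, integral_indicator measurableSet_Iic]
        rfl
      rw [this]
      by_cases h : u ≤ A
      · simp only [indicator, mem_Iic, h, if_true, hF]
        ring
      · simp [indicator, mem_Iic, h]
    have step2 : (∫ u in Iic A, g u * pr g u ^ (k+1)) = ∫ u, ∫ v, H u v := by
      simp only [inner1]
      rw [integral_indicator measurableSet_Iic]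
    -- Step 3: swap
    have step3 : (∫ u, ∫ v, H u v) = ∫ v, ∫ u, H u v :=
      integral_integral_swap (by exact hHi)
    -- Step 4: compute the inner integral after swapping
    have inner2 : ∀ v : ℝ, (∫ u, H u v)
        = (Iic A).indicator (fun v => g v * ((c^(k+1) - pr g v ^ (k+1)) / (k+1))) v := by
      intro v
      have e1 : (fun u => H u v) = fun u => g v * (Icc v A).indicator F u := by
        funext u
        simp only [hH, indicator, mem_Iic, mem_Icc]
        by_cases h1 : u ≤ A <;> by_cases h2 : v ≤ u <;> simp [h1, h2] <;> ring
      rw [e1, integral_const_mul, integral_indicator measurableSet_Icc]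
      by_cases hv : v ≤ A
      · have hval : (∫ u in Icc v A, F u) = (c^(k+1) - pr g v ^ (k+1)) / (k+1) := by
          rw [integral_Icc_eq_integral_Ioc]
          have hsplit := split_Iic (fun B => Fk_integrableOn hgm hg0 hgi k B) hv
          rw [ih A, ih v] at hsplit
          rw [sub_div]
          linarith
        simp only [indicator, mem_Iic, hv, if_true, hval]
      · simp [indicator, mem_Iic, hv, Icc_eq_empty hv]
    -- Step 5: evaluate and solve the linear equation
    have hIk1 := Fk_integrableOn hgm hg0 hgi (k+1) A
    have step5 : (∫ v, ∫ u, H u v)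
        = (c^(k+1)/((k:ℝ)+1)) * c - (∫ u in Iic A, g u * pr g u ^ (k+1)) / ((k:ℝ)+1) := by
      simp only [inner2]
      rw [integral_indicator measurableSet_Iic]
      have e2 : (fun v => g v * ((c^(k+1) - pr g v ^ (k+1)) / ((k:ℝ)+1)))
          = fun v => (c^(k+1)/((k:ℝ)+1)) * g v - (g v * pr g v ^ (k+1)) / ((k:ℝ)+1) := by
        funext v
        have hk0 : ((k:ℝ)+1) ≠ 0 := by positivity
        field_simp
      rw [show (∫ v in Iic A, g v * ((c ^ (k + 1) - pr g v ^ (k + 1)) / ((k:ℕ)+1)))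
          = ∫ v in Iic A, ((c^(k+1)/((k:ℝ)+1)) * g v - (g v * pr g v ^ (k+1)) / ((k:ℝ)+1)) by
        rw [← e2]]
      rw [integral_sub ((hgi A).const_mul _) (hIk1.div_const _)]
      rw [integral_const_mul, integral_div]
      rfl
    set L := ∫ u in Iic A, g u * pr g u ^ (k+1) with hL
    have E : L = (c^(k+1)/((k:ℝ)+1)) * c - L / ((k:ℝ)+1) := by
      conv_lhs => rw [step2, step3, step5]
    have hk0 : (0:ℝ) < (k:ℝ)+1 := by positivity
    have hk2 : (0:ℝ) < (k:ℝ)+1+1 := by positivity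
    have : L * ((k:ℝ)+1+1) = c^(k+1) * c := by
      field_simp at E
      linarith
    have : L = c^(k+1+1) / ((k:ℝ)+1+1) := by
      rw [pow_succ]
      field_simp
      linarith
    rw [this]
    push_cast
    ring

theorem translate' (G : ℝ → ℝ) (t ξ : ℝ) :
    ∫ s in Set.Iic ξ, G (s + t) = ∫ u in Set.Iic (ξ + t), G u := by
  rw [← integral_indicator measurableSet_Iic, ← integral_indicator measurableSet_Iic]
  rw [show (Iic ξ).indicator (fun s => G (s + t)) = fun s => (Iic (ξ+t)).indicator G (s + t) by
    funext s
    have h : s ≤ ξ ↔ s + t ≤ ξ + t := by constructor <;> intro h <;> linarith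
    by_cases hs : s ≤ ξ
    · simp [indicator, hs, h.mp hs]
    · simp [indicator, hs, fun hc => hs (h.mpr hc)]]
  simpa using integral_add_right_eq_self (fun s => (Iic (ξ+t)).indicator G s) t

include hgm hg0 hgi in
theorem shift_integrableOn (t ξ : ℝ) {G : ℝ → ℝ} (hGm : Measurable G)
    (hGi : ∀ A : ℝ, IntegrableOn G (Iic A)) :
    IntegrableOn (fun s => G (s + t)) (Iic ξ) := by
  have h1 : Integrable ((Iic (ξ+t)).indicator G) volume :=
    (integrable_indicator_iff measurableSet_Iic).2 (hGi (ξ+t))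
  have h2 : Integrable (fun s => (Iic (ξ+t)).indicator G (s + t)) volume :=
    h1.comp_add_right t
  have h3 : (fun s => (Iic (ξ+t)).indicator G (s + t))
      = (Iic ξ).indicator (fun s => G (s + t)) := by
    funext s
    have h : s ≤ ξ ↔ s + t ≤ ξ + t := by constructor <;> intro h <;> linarith
    by_cases hs : s ≤ ξ
    · simp [indicator, hs, h.mp hs]
    · simp [indicator, hs, fun hc => hs (h.mpr hc)]
  rw [h3] at h2
  exact (integrable_indicator_iff measurableSet_Iic).1 h2

include hgm hg0 hgi in
theorem kernel_int (ξ η : ℝ) :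
    Integrable (fun p : ℝ × ℝ => g (p.1 + p.2))
      ((volume.restrict (Iic ξ)).prod (volume.restrict (Ioc 0 η))) := by
  haveI : IsFiniteMeasure (volume.restrict (Ioc (0:ℝ) η)) :=
    ⟨by rw [Measure.restrict_apply_univ]; exact measure_Ioc_lt_top⟩
  rw [integrable_prod_iff']
  · constructor
    · refine Filter.Eventually.of_forall fun t => ?_
      exact shift_integrableOn hgm hg0 hgi t ξ hgm hgi
    · have hnorm : (fun t => ∫ s in Iic ξ, ‖g (s + t)‖) = fun t => pr g (ξ + t) := by
        funext t
        rw [show (fun s => ‖g (s+t)‖) = fun s => g (s+t) by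
          funext s; exact Real.norm_of_nonneg (hg0 _)]
        exact translate' g t ξ
      rw [hnorm]
      refine Integrable.mono' (integrable_const (pr g (ξ + η)))
        (((pr_mono hg0 hgi).comp (fun a b hab => by simpa using hab : Monotone
          (fun t : ℝ => ξ + t))).measurable.aestronglyMeasurable) ?_
      filter_upwards [ae_restrict_mem measurableSet_Ioc] with t ht
      rw [Real.norm_of_nonneg (pr_nonneg hg0 _)]
      exact pr_mono hg0 hgi (by linarith [ht.2])
  · exact (hgm.comp (measurable_fst.add measurable_snd)).aestronglyMeasurable

include hgm hg0 hgi in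
theorem kernel_int' (ξ η : ℝ) :
    Integrable (fun p : ℝ × ℝ => g (p.1 + p.2))
      ((volume : Measure (ℝ × ℝ)).restrict (Iic ξ ×ˢ Ioc 0 η)) := by
  rw [Measure.volume_eq_prod ℝ ℝ, ← Measure.prod_restrict]
  exact kernel_int hgm hg0 hgi ξ η

include hgm hg0 hgi in
theorem kernel_integral_le (ξ : ℝ) {η : ℝ} (hη : 0 ≤ η) :
    ∫ p in Iic ξ ×ˢ Ioc 0 η, g (p.1 + p.2) ≤ η * pr g (ξ + η) := by
  haveI : IsFiniteMeasure (volume.restrict (Ioc (0:ℝ) η)) :=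
    ⟨by rw [Measure.restrict_apply_univ]; exact measure_Ioc_lt_top⟩
  rw [Measure.volume_eq_prod ℝ ℝ, ← Measure.prod_restrict]
  rw [integral_prod_symm _ (kernel_int hgm hg0 hgi ξ η)]
  simp only
  have heq : ∀ t : ℝ, (∫ s in Iic ξ, g (s + t)) = pr g (ξ + t) := fun t => translate' g t ξ
  calc (∫ t in Ioc (0:ℝ) η, ∫ s in Iic ξ, g (s + t))
      = ∫ t in Ioc (0:ℝ) η, pr g (ξ + t) := by simp_rw [heq]
    _ ≤ ∫ _t in Ioc (0:ℝ) η, pr g (ξ + η) := by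
        refine integral_mono_of_nonneg ?_ (integrable_const _) ?_
        · exact Filter.Eventually.of_forall fun t => pr_nonneg hg0 _
        · filter_upwards [ae_restrict_mem measurableSet_Ioc] with t ht
          exact pr_mono hg0 hgi (by linarith [ht.2])
    _ = η * pr g (ξ + η) := by
        rw [setIntegral_const, measureReal_def, Real.volume_Ioc, smul_eq_mul, sub_zero,
          ENNReal.toReal_ofReal hη]
end


/-- The Volterra operator with kernel g. -/
noncomputable def Wo (g : ℝ → ℝ) (f : ℝ → ℝ → ℝ) (ξ η : ℝ) : ℝ :=
  ∫ s in Set.Iic ξ, ∫ t in (0:ℝ)..η, g (s + t) * f s t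

/-- a.e.-measurability on the upper half plane -/
def Mea (f : ℝ → ℝ → ℝ) : Prop :=
  AEStronglyMeasurable (fun p : ℝ × ℝ => f p.1 p.2)
    ((volume : Measure (ℝ × ℝ)).restrict (univ ×ˢ Ioi (0:ℝ)))

/-- bounded on strips -/
def Bddo (f : ℝ → ℝ → ℝ) : Prop :=
  ∀ A B : ℝ, ∃ M : ℝ, ∀ s ≤ A, ∀ t ∈ Ioc (0:ℝ) B, |f s t| ≤ M

theorem box_sub (ξ η : ℝ) : (Iic ξ ×ˢ Ioc (0:ℝ) η) ⊆ (univ ×ˢ Ioi (0:ℝ)) :=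
  prod_mono (subset_univ _) Ioc_subset_Ioi_self

section
variable {g : ℝ → ℝ} (hgm : Measurable g) (hg0 : ∀ x, 0 ≤ g x)
  (hgi : ∀ A : ℝ, IntegrableOn g (Set.Iic A))

include hgm hg0 hgi in
theorem box_integrable {f : ℝ → ℝ → ℝ} (hf : Mea f) {ξ η M : ℝ}
    (hM : ∀ s ≤ ξ, ∀ t ∈ Ioc (0:ℝ) η, |f s t| ≤ M) :
    Integrable (fun p : ℝ × ℝ => g (p.1 + p.2) * f p.1 p.2)
      ((volume : Measure (ℝ × ℝ)).restrict (Iic ξ ×ˢ Ioc 0 η)) := by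
  have hker := kernel_int' hgm hg0 hgi ξ η
  refine Integrable.mono' (hker.const_mul |M|) ?_ ?_
  · exact ((hgm.comp (measurable_fst.add measurable_snd)).aestronglyMeasurable.restrict).mul
      (hf.mono_measure (Measure.restrict_mono (box_sub ξ η) le_rfl))
  · filter_upwards [ae_restrict_mem (measurableSet_Iic.prod measurableSet_Ioc)] with p hp
    rcases hp with ⟨hp1, hp2⟩
    rw [Real.norm_eq_abs, abs_mul, abs_of_nonneg (hg0 _)]
    calc g (p.1 + p.2) * |f p.1 p.2| ≤ g (p.1 + p.2) * |M| :=
          mul_le_mul_of_nonneg_left (le_trans (hM _ hp1 _ hp2) (le_abs_self M)) (hg0 _)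
      _ = |M| * g (p.1 + p.2) := mul_comm _ _

include hgm hg0 hgi in
theorem Wo_eq {f : ℝ → ℝ → ℝ} {ξ η : ℝ} (hη : 0 ≤ η) (hf : Mea f) {M : ℝ}
    (hM : ∀ s ≤ ξ, ∀ t ∈ Ioc (0:ℝ) η, |f s t| ≤ M) :
    Wo g f ξ η = ∫ p in Iic ξ ×ˢ Ioc 0 η, g (p.1 + p.2) * f p.1 p.2 := by
  have hfi := box_integrable hgm hg0 hgi hf hM
  rw [Measure.volume_eq_prod ℝ ℝ, ← Measure.prod_restrict] at hfi ⊢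
  rw [Wo]
  simp_rw [intervalIntegral.integral_of_le hη]
  exact (integral_prod _ hfi).symm

include hgm hg0 hgi in
theorem Wo_strip {f : ℝ → ℝ → ℝ} (hf : Mea f) (hfb : Bddo f) : Bddo (Wo g f) := by
  intro A B
  obtain ⟨M, hM⟩ := hfb A B
  refine ⟨|M| * (B * pr g (A + B)), fun ξ hξ η hη => ?_⟩
  have hη0 : (0:ℝ) ≤ η := le_of_lt hη.1
  have hMbox : ∀ s ≤ ξ, ∀ t ∈ Ioc (0:ℝ) η, |f s t| ≤ M := fun s hs t ht =>
    hM s (le_trans hs hξ) t ⟨ht.1, le_trans ht.2 hη.2⟩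
  rw [Wo_eq hgm hg0 hgi hη0 hf hMbox]
  have h1 : |∫ p in Iic ξ ×ˢ Ioc 0 η, g (p.1 + p.2) * f p.1 p.2|
      ≤ ∫ p in Iic ξ ×ˢ Ioc 0 η, |M| * g (p.1 + p.2) := by
    rw [← Real.norm_eq_abs]
    refine le_trans (norm_integral_le_integral_norm _) ?_
    refine integral_mono_of_nonneg (Filter.Eventually.of_forall fun p => norm_nonneg _)
      ((kernel_int' hgm hg0 hgi ξ η).const_mul |M|) ?_
    filter_upwards [ae_restrict_mem (measurableSet_Iic.prod measurableSet_Ioc)] with p hp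
    rcases hp with ⟨hp1, hp2⟩
    rw [Real.norm_eq_abs, abs_mul, abs_of_nonneg (hg0 _)]
    calc g (p.1 + p.2) * |f p.1 p.2| ≤ g (p.1 + p.2) * |M| :=
          mul_le_mul_of_nonneg_left (le_trans (hMbox _ hp1 _ hp2) (le_abs_self M)) (hg0 _)
      _ = |M| * g (p.1 + p.2) := mul_comm _ _
  refine le_trans h1 ?_
  rw [integral_const_mul]
  have h2 : (∫ p in Iic ξ ×ˢ Ioc 0 η, g (p.1 + p.2)) ≤ η * pr g (ξ + η) :=
    kernel_integral_le hgm hg0 hgi ξ hη0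
  have h3 : η * pr g (ξ + η) ≤ B * pr g (A + B) := by
    have hB : (0:ℝ) ≤ B := le_trans hη0 hη.2
    have hm1 : pr g (ξ + η) ≤ pr g (A + B) :=
      pr_mono hg0 hgi (add_le_add hξ hη.2)
    have hm2 : (0:ℝ) ≤ pr g (ξ + η) := pr_nonneg hg0 (ξ + η)
    nlinarith [mul_nonneg (sub_nonneg.2 hη.2) hm2, mul_le_mul_of_nonneg_left hm1 hB]
  exact mul_le_mul_of_nonneg_left (le_trans h2 h3) (abs_nonneg M)

include hgm hg0 hgi in
theorem Wo_mea {f : ℝ → ℝ → ℝ} (hf : Mea f) (hfb : Bddo f) : Mea (Wo g f) := by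
  obtain ⟨F₀, hF₀m, hfF₀⟩ := hf
  set S : Set ((ℝ × ℝ) × (ℝ × ℝ)) :=
    {z | z.2.1 ≤ z.1.1 ∧ 0 < z.2.2 ∧ z.2.2 ≤ z.1.2} with hS
  have hSm : MeasurableSet S := by
    refine MeasurableSet.inter (measurableSet_le (measurable_fst.comp measurable_snd)
      (measurable_fst.comp measurable_fst)) (MeasurableSet.inter ?_ ?_)
    · exact measurableSet_lt measurable_const (measurable_snd.comp measurable_snd)
    · exact measurableSet_le (measurable_snd.comp measurable_snd)
        (measurable_snd.comp measurable_fst)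
  set K : ((ℝ × ℝ) × (ℝ × ℝ)) → ℝ :=
    S.indicator (fun z => g (z.2.1 + z.2.2) * F₀ z.2) with hK
  have hKm : StronglyMeasurable K := by
    refine StronglyMeasurable.indicator ?_ hSm
    exact ((hgm.comp ((measurable_fst.comp measurable_snd).add
      (measurable_snd.comp measurable_snd))).stronglyMeasurable.mul
      (hF₀m.comp_measurable measurable_snd))
  have hVm : StronglyMeasurable (fun q : ℝ × ℝ => ∫ p : ℝ × ℝ, K (q, p)) :=
    hKm.integral_prod_right'
  refine ⟨_, hVm, ?_⟩
  have hae : ∀ᵐ p : ℝ × ℝ ∂(volume : Measure (ℝ × ℝ)),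
      p ∈ (univ ×ˢ Ioi (0:ℝ)) → f p.1 p.2 = F₀ p := by
    rw [← ae_restrict_iff' (MeasurableSet.univ.prod measurableSet_Ioi)]
    exact hfF₀
  refine (ae_restrict_iff' (MeasurableSet.univ.prod measurableSet_Ioi)).2
    (Filter.Eventually.of_forall fun q hq => ?_)
  rcases q with ⟨ξ, η⟩
  show Wo g f ξ η = ∫ p : ℝ × ℝ, K ((ξ, η), p)
  have hη : (0:ℝ) < η := hq.2
  obtain ⟨M, hM⟩ := hfb ξ η
  -- Wo g f ξ η = ∫ over box of g • f = ∫ over box of g • F₀ = ∫ K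
  rw [Wo_eq hgm hg0 hgi (le_of_lt hη) ⟨F₀, hF₀m, hfF₀⟩ hM]
  have e1 : (fun p : ℝ × ℝ => K ((ξ, η), p))
      = (Iic ξ ×ˢ Ioc 0 η).indicator (fun p : ℝ × ℝ => g (p.1 + p.2) * F₀ p) := by
    funext p
    by_cases hp : p ∈ Iic ξ ×ˢ Ioc 0 η
    · have hpS : ((ξ, η), p) ∈ S := ⟨hp.1, hp.2.1, hp.2.2⟩
      simp only [hK, indicator, hpS, hp, if_true]
    · have hpS : ((ξ, η), p) ∉ S := by
        intro hc
        exact hp ⟨hc.1, hc.2.1, hc.2.2⟩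
      simp only [hK, indicator, hpS, hp, if_false]
  have e2 : (∫ p : ℝ × ℝ, K ((ξ, η), p))
      = ∫ p in Iic ξ ×ˢ Ioc 0 η, g (p.1 + p.2) * F₀ p := by
    rw [e1, integral_indicator (measurableSet_Iic.prod measurableSet_Ioc)]
  rw [e2]
  refine integral_congr_ae ?_
  have : ∀ᵐ p : ℝ × ℝ ∂((volume : Measure (ℝ × ℝ)).restrict (Iic ξ ×ˢ Ioc 0 η)),
      p ∈ (univ ×ˢ Ioi (0:ℝ)) → f p.1 p.2 = F₀ p :=
    ae_restrict_of_ae hae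
  filter_upwards [this, ae_restrict_mem (measurableSet_Iic.prod measurableSet_Ioc)]
    with p h1 h2
  rw [h1 (box_sub ξ η h2)]


include hgm hg0 hgi in
theorem key_est (ξ : ℝ) {η : ℝ} (hη : 0 ≤ η) (k : ℕ) :
    (∫ p in Iic ξ ×ˢ Ioc 0 η,
        g (p.1 + p.2) * (p.2 ^ k * (pr g (p.1 + p.2)) ^ k / ((k.factorial : ℝ)) ^ 2))
      ≤ η ^ (k+1) * (pr g (ξ + η)) ^ (k+1) / (((k+1).factorial : ℝ)) ^ 2 := by
  have hkf : (0:ℝ) < (k.factorial : ℝ) := by exact_mod_cast k.factorial_pos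
  -- integrability on the box
  have hPm : Mea (fun s t => t ^ k * (pr g (s + t)) ^ k / ((k.factorial : ℝ)) ^ 2) := by
    refine Measurable.aestronglyMeasurable ?_
    exact ((measurable_snd.pow_const k).mul
      (((pr_mono hg0 hgi).measurable.comp (measurable_fst.add measurable_snd)).pow_const k)).div_const _
  have hPb : ∀ s ≤ ξ, ∀ t ∈ Ioc (0:ℝ) η,
      |t ^ k * (pr g (s + t)) ^ k / ((k.factorial : ℝ)) ^ 2|
        ≤ η ^ k * (pr g (ξ + η)) ^ k / ((k.factorial : ℝ)) ^ 2 := by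
    intro s hs t ht
    have ht0 : (0:ℝ) ≤ t := le_of_lt ht.1
    have h1 : (0:ℝ) ≤ pr g (s + t) := pr_nonneg hg0 _
    rw [abs_of_nonneg (by positivity)]
    have h2 : t ^ k ≤ η ^ k := pow_le_pow_left₀ ht0 ht.2 k
    have h3 : (pr g (s + t)) ^ k ≤ (pr g (ξ + η)) ^ k :=
      pow_le_pow_left₀ h1 (pr_mono hg0 hgi (add_le_add hs ht.2)) k
    have h4 : (0:ℝ) ≤ η ^ k := by positivity
    have h5 : t ^ k * (pr g (s + t)) ^ k ≤ η ^ k * (pr g (ξ + η)) ^ k :=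
      mul_le_mul h2 h3 (pow_nonneg h1 k) h4
    exact (div_le_div_iff_of_pos_right (by positivity)).2 h5
  have hfi := box_integrable hgm hg0 hgi hPm hPb
  rw [Measure.volume_eq_prod ℝ ℝ, ← Measure.prod_restrict] at hfi ⊢
  rw [integral_prod_symm _ hfi]
  simp only
  -- inner integral over s, for fixed t
  have hinner : ∀ t ∈ Ioc (0:ℝ) η,
      (∫ s in Iic ξ, g (s + t) * (t ^ k * (pr g (s + t)) ^ k / ((k.factorial : ℝ)) ^ 2))
        = (t ^ k / ((k.factorial : ℝ)) ^ 2) * ((pr g (ξ + t)) ^ (k+1) / ((k:ℝ)+1)) := by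
    intro t ht
    have e1 : (fun s => g (s + t) * (t ^ k * (pr g (s + t)) ^ k / ((k.factorial : ℝ)) ^ 2))
        = fun s => (t ^ k / ((k.factorial : ℝ)) ^ 2) *
            ((fun u => g u * (pr g u) ^ k) (s + t)) := by
      funext s
      simp only
      ring
    rw [e1, integral_const_mul, translate' (fun u => g u * (pr g u) ^ k) t ξ,
      Jident hgm hg0 hgi k (ξ + t)]
  -- bound the t-integral
  have hub : ∀ t ∈ Ioc (0:ℝ) η,
      (t ^ k / ((k.factorial : ℝ)) ^ 2) * ((pr g (ξ + t)) ^ (k+1) / ((k:ℝ)+1))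
        ≤ ((pr g (ξ + η)) ^ (k+1) / (((k:ℝ)+1) * ((k.factorial : ℝ)) ^ 2)) * t ^ k := by
    intro t ht
    have ht0 : (0:ℝ) ≤ t := le_of_lt ht.1
    have h1 : (0:ℝ) ≤ pr g (ξ + t) := pr_nonneg hg0 _
    have h3 : (pr g (ξ + t)) ^ (k+1) ≤ (pr g (ξ + η)) ^ (k+1) :=
      pow_le_pow_left₀ h1 (pr_mono hg0 hgi (by linarith [ht.2])) (k+1)
    have e : (t ^ k / ((k.factorial : ℝ)) ^ 2) * ((pr g (ξ + t)) ^ (k+1) / ((k:ℝ)+1))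
        = ((pr g (ξ + t)) ^ (k+1) / (((k:ℝ)+1) * ((k.factorial : ℝ)) ^ 2)) * t ^ k := by
      have hkf' : ((k.factorial : ℝ)) ≠ 0 := ne_of_gt hkf
      have hk1' : ((k:ℝ)+1) ≠ 0 := by positivity
      field_simp
    rw [e]
    have hc : (0:ℝ) < ((k:ℝ)+1) * ((k.factorial : ℝ)) ^ 2 := by positivity
    have htk : (0:ℝ) ≤ t ^ k := pow_nonneg ht0 k
    exact mul_le_mul_of_nonneg_right ((div_le_div_iff_of_pos_right hc).2 h3) htk
  calc (∫ t in Ioc (0:ℝ) η, ∫ s in Iic ξ,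
          g (s + t) * (t ^ k * (pr g (s + t)) ^ k / ((k.factorial : ℝ)) ^ 2))
      ≤ ∫ t in Ioc (0:ℝ) η,
          ((pr g (ξ + η)) ^ (k+1) / (((k:ℝ)+1) * ((k.factorial : ℝ)) ^ 2)) * t ^ k := by
        refine integral_mono_of_nonneg ?_ ?_ ?_
        · filter_upwards [ae_restrict_mem measurableSet_Ioc] with t ht
          refine setIntegral_nonneg measurableSet_Iic fun s _ => ?_
          have ht0 : (0:ℝ) ≤ t := le_of_lt ht.1
          have h1 : (0:ℝ) ≤ pr g (s + t) := pr_nonneg hg0 _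
          exact mul_nonneg (hg0 _) (by positivity)
        · exact (continuous_const.mul (continuous_pow k)).integrableOn_Ioc
        · filter_upwards [ae_restrict_mem measurableSet_Ioc] with t ht
          rw [hinner t ht]
          exact hub t ht
      _ = η ^ (k+1) * (pr g (ξ + η)) ^ (k+1) / (((k+1).factorial : ℝ)) ^ 2 := by
        rw [integral_const_mul, ← intervalIntegral.integral_of_le hη, integral_pow]
        have : (((k+1).factorial : ℝ)) = ((k:ℝ)+1) * (k.factorial : ℝ) := by
          rw [Nat.factorial_succ]; push_cast; ring
        rw [this]
        have hk1 : (0:ℝ) < (k:ℝ)+1 := by positivity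
        field_simp
        ring
end


/-- Gronwall-type estimate: if `0 ≤ m ≤ 1 + Wm` for the Volterra operator
`(Wm)(ξ,η) = ∫_{-∞}^ξ ds ∫_0^η dt μ(s+t) m(s,t)` and the iteration converges
(`Wⁿm → 0` pointwise), then `m(ξ,η) ≤ 1 + ∑_{n≥1} ηⁿ μ₁(ξ+η)ⁿ/(n!)²`. -/
theorem stmt_7 (μ : ℝ → ℝ) (hμ : ∀ x, 0 ≤ μ x)
    (hint : ∀ A : ℝ, IntegrableOn μ (Set.Iic A))
    (μ1 : ℝ → ℝ) (hμ1 : ∀ ξ, μ1 ξ = ∫ s in Set.Iic ξ, μ s)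
    (W : (ℝ → ℝ → ℝ) → (ℝ → ℝ → ℝ))
    (hW : ∀ m ξ η, W m ξ η = ∫ s in Set.Iic ξ, ∫ t in (0 : ℝ)..η, μ (s + t) * m s t)
    (m : ℝ → ℝ → ℝ) (hm0 : ∀ ξ η, 0 ≤ m ξ η)
    (hmc : Continuous fun p : ℝ × ℝ => m p.1 p.2)
    (hmb : ∀ A B : ℝ, ∃ M : ℝ, ∀ ξ ≤ A, ∀ η ∈ Set.Icc (0 : ℝ) B, m ξ η ≤ M)
    (hineq : ∀ ξ η : ℝ, 0 ≤ η → m ξ η ≤ 1 + W m ξ η)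
    (hconv : ∀ ξ η : ℝ, 0 ≤ η →
      Filter.Tendsto (fun n => (W^[n] m) ξ η) Filter.atTop (nhds 0)) :
    ∀ ξ η : ℝ, 0 ≤ η →
      m ξ η ≤ 1 + ∑' n : ℕ,
        η ^ (n + 1) * (μ1 (ξ + η)) ^ (n + 1) / ((Nat.factorial (n + 1) : ℝ)) ^ 2 := by
  -- a measurable nonnegative representative of μ
  have hμaesm : AEStronglyMeasurable μ (volume : Measure ℝ) := by
    have h1 : AEStronglyMeasurable μ (volume.restrict (⋃ n : ℕ, Iic (n:ℝ))) := by
      rw [aestronglyMeasurable_iUnion_iff]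
      exact fun n => (hint (n:ℝ)).aestronglyMeasurable
    rwa [show (⋃ n : ℕ, Iic (n:ℝ)) = univ by
        ext x; simp only [mem_iUnion, mem_Iic, mem_univ, iff_true]; exact exists_nat_ge x,
      Measure.restrict_univ] at h1
  obtain ⟨g₀, hg₀m, hμg₀⟩ := hμaesm
  set g : ℝ → ℝ := fun x => max (g₀ x) 0 with hgdef
  have hgm : Measurable g := hg₀m.measurable.max measurable_const
  have hg0 : ∀ x, 0 ≤ g x := fun x => le_max_right _ _
  have hge : ∀ᵐ x ∂(volume : Measure ℝ), μ x = g x := by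
    filter_upwards [hμg₀] with x hx
    rw [hgdef]
    simp only
    rw [← hx, max_eq_left (hμ x)]
  have hgi : ∀ A : ℝ, IntegrableOn g (Iic A) := fun A =>
    (hint A).congr (ae_restrict_of_ae hge)
  have hpr : ∀ x, μ1 x = pr g x := fun x => by
    rw [hμ1, pr]
    exact integral_congr_ae (ae_restrict_of_ae hge)
  -- W coincides with Wo g
  have hWW : W = Wo g := by
    funext f ξ η
    rw [hW, Wo]
    refine integral_congr_ae (Filter.Eventually.of_forall fun s => ?_)
    refine intervalIntegral.integral_congr_ae ?_
    have hteq : ∀ᵐ t ∂(volume : Measure ℝ), μ (s + t) = g (s + t) :=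
      (measurePreserving_add_left volume s).quasiMeasurePreserving.ae hge
    filter_upwards [hteq] with t ht _
    rw [ht]
  -- the comparison functions
  set P : ℕ → ℝ → ℝ → ℝ :=
    fun k s t => t ^ k * (pr g (s + t)) ^ k / ((Nat.factorial k : ℝ)) ^ 2 with hPdef
  have hPmea : ∀ k, Mea (P k) := by
    intro k
    refine Measurable.aestronglyMeasurable ?_
    exact ((measurable_snd.pow_const k).mul
      (((pr_mono hg0 hgi).measurable.comp (measurable_fst.add measurable_snd)).pow_const k)).div_const _
  have hPb : ∀ (k : ℕ) (ξ η : ℝ), ∀ s ≤ ξ, ∀ t ∈ Ioc (0:ℝ) η,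
      |P k s t| ≤ η ^ k * (pr g (ξ + η)) ^ k / ((Nat.factorial k : ℝ)) ^ 2 := by
    intro k ξ η s hs t ht
    have ht0 : (0:ℝ) ≤ t := le_of_lt ht.1
    have h1 : (0:ℝ) ≤ pr g (s + t) := pr_nonneg hg0 _
    have hkf : (0:ℝ) < (Nat.factorial k : ℝ) := by exact_mod_cast k.factorial_pos
    rw [hPdef]
    simp only
    rw [abs_of_nonneg (by positivity)]
    have h2 : t ^ k ≤ η ^ k := pow_le_pow_left₀ ht0 ht.2 k
    have h3 : (pr g (s + t)) ^ k ≤ (pr g (ξ + η)) ^ k :=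
      pow_le_pow_left₀ h1 (pr_mono hg0 hgi (add_le_add hs ht.2)) k
    have h5 : t ^ k * (pr g (s + t)) ^ k ≤ η ^ k * (pr g (ξ + η)) ^ k :=
      mul_le_mul h2 h3 (pow_nonneg h1 k) (pow_nonneg (le_trans ht0 ht.2) k)
    exact (div_le_div_iff_of_pos_right (by positivity)).2 h5
  -- basic properties of m
  have hmMea : Mea m := hmc.aestronglyMeasurable.restrict
  have hmBdd : Bddo m := by
    intro A B
    obtain ⟨M, hM⟩ := hmb A B
    exact ⟨M, fun s hs t ht => by
      rw [abs_of_nonneg (hm0 s t)]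
      exact hM s hs t ⟨le_of_lt ht.1, ht.2⟩⟩
  -- the iterates are measurable and bounded on strips
  have hiter : ∀ n : ℕ, Mea ((Wo g)^[n] m) ∧ Bddo ((Wo g)^[n] m) := by
    intro n
    induction n with
    | zero => exact ⟨hmMea, hmBdd⟩
    | succ n ih =>
      rw [Function.iterate_succ_apply']
      exact ⟨Wo_mea hgm hg0 hgi ih.1 ih.2, Wo_strip hgm hg0 hgi ih.1 ih.2⟩
  -- main induction
  have main : ∀ n : ℕ, ∀ ξ η : ℝ, 0 ≤ η →
      m ξ η ≤ (∑ k ∈ Finset.range n, P k ξ η) + ((Wo g)^[n] m) ξ η := by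
    intro n
    induction n with
    | zero => intro ξ η _; simp
    | succ n ih =>
      intro ξ η hη
      have hWn := hiter n
      obtain ⟨Mn, hMn⟩ := hWn.2 ξ η
      obtain ⟨Mm, hMm⟩ := hmBdd ξ η
      have hPint : ∀ k : ℕ, Integrable (fun p : ℝ × ℝ => g (p.1 + p.2) * P k p.1 p.2)
          ((volume : Measure (ℝ × ℝ)).restrict (Iic ξ ×ˢ Ioc 0 η)) := fun k =>
        box_integrable hgm hg0 hgi (hPmea k) (hPb k ξ η)
      have hWnint : Integrable (fun p : ℝ × ℝ => g (p.1 + p.2) * ((Wo g)^[n] m) p.1 p.2)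
          ((volume : Measure (ℝ × ℝ)).restrict (Iic ξ ×ˢ Ioc 0 η)) :=
        box_integrable hgm hg0 hgi hWn.1 hMn
      have hUint : Integrable (fun p : ℝ × ℝ =>
          (∑ k ∈ Finset.range n, g (p.1 + p.2) * P k p.1 p.2)
            + g (p.1 + p.2) * ((Wo g)^[n] m) p.1 p.2)
          ((volume : Measure (ℝ × ℝ)).restrict (Iic ξ ×ˢ Ioc 0 η)) :=
        (integrable_finset_sum _ fun k _ => hPint k).add hWnint
      have step1 : m ξ η ≤ 1 + Wo g m ξ η := by
        rw [← hWW]; exact hineq ξ η hη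
      have step2 : Wo g m ξ η = ∫ p in Iic ξ ×ˢ Ioc 0 η, g (p.1 + p.2) * m p.1 p.2 :=
        Wo_eq hgm hg0 hgi hη hmMea hMm
      have step3 : (∫ p in Iic ξ ×ˢ Ioc 0 η, g (p.1 + p.2) * m p.1 p.2)
          ≤ ∫ p in Iic ξ ×ˢ Ioc 0 η,
              ((∑ k ∈ Finset.range n, g (p.1 + p.2) * P k p.1 p.2)
                + g (p.1 + p.2) * ((Wo g)^[n] m) p.1 p.2) := by
        refine integral_mono_of_nonneg
          (Filter.Eventually.of_forall fun p => mul_nonneg (hg0 _) (hm0 _ _)) hUint ?_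
        filter_upwards [ae_restrict_mem (measurableSet_Iic.prod measurableSet_Ioc)] with p hp
        have h1 : m p.1 p.2 ≤ (∑ k ∈ Finset.range n, P k p.1 p.2) + ((Wo g)^[n] m) p.1 p.2 :=
          ih p.1 p.2 (le_of_lt hp.2.1)
        calc g (p.1 + p.2) * m p.1 p.2
            ≤ g (p.1 + p.2) * ((∑ k ∈ Finset.range n, P k p.1 p.2) + ((Wo g)^[n] m) p.1 p.2) :=
              mul_le_mul_of_nonneg_left h1 (hg0 _)
          _ = (∑ k ∈ Finset.range n, g (p.1 + p.2) * P k p.1 p.2)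
                + g (p.1 + p.2) * ((Wo g)^[n] m) p.1 p.2 := by
              rw [mul_add, Finset.mul_sum]
      have step4 : (∫ p in Iic ξ ×ˢ Ioc 0 η,
          ((∑ k ∈ Finset.range n, g (p.1 + p.2) * P k p.1 p.2)
            + g (p.1 + p.2) * ((Wo g)^[n] m) p.1 p.2))
          = (∑ k ∈ Finset.range n,
              ∫ p in Iic ξ ×ˢ Ioc 0 η, g (p.1 + p.2) * P k p.1 p.2)
            + ∫ p in Iic ξ ×ˢ Ioc 0 η, g (p.1 + p.2) * ((Wo g)^[n] m) p.1 p.2 := by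
        rw [integral_add (integrable_finset_sum _ fun k _ => hPint k) hWnint,
          integral_finset_sum _ fun k _ => hPint k]
      have step5 : ∀ k : ℕ, (∫ p in Iic ξ ×ˢ Ioc 0 η, g (p.1 + p.2) * P k p.1 p.2)
          ≤ P (k+1) ξ η := fun k => key_est hgm hg0 hgi ξ hη k
      have step6 : (∫ p in Iic ξ ×ˢ Ioc 0 η, g (p.1 + p.2) * ((Wo g)^[n] m) p.1 p.2)
          = ((Wo g)^[n+1] m) ξ η := by
        rw [Function.iterate_succ_apply']
        exact (Wo_eq hgm hg0 hgi hη hWn.1 hMn).symm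
      have hP0 : P 0 ξ η = 1 := by
        rw [hPdef]; simp
      calc m ξ η ≤ 1 + Wo g m ξ η := step1
        _ ≤ 1 + ((∑ k ∈ Finset.range n, P (k+1) ξ η) + ((Wo g)^[n+1] m) ξ η) := by
            rw [step2]
            refine add_le_add_right (le_trans step3 ?_) 1
            rw [step4, step6]
            exact add_le_add_left (Finset.sum_le_sum fun k _ => step5 k) _
        _ = (∑ k ∈ Finset.range (n+1), P k ξ η) + ((Wo g)^[n+1] m) ξ η := by
            rw [Finset.sum_range_succ']
            rw [hP0]
            ring
  -- take the limit
  intro ξ η hη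
  have hx : (0:ℝ) ≤ η * pr g (ξ + η) := mul_nonneg hη (pr_nonneg hg0 _)
  have hsum : Summable (fun k => P k ξ η) := by
    refine Summable.of_nonneg_of_le (fun k => ?_) (fun k => ?_)
      (Real.summable_pow_div_factorial (η * pr g (ξ + η)))
    · rw [hPdef]
      simp only
      have := pr_nonneg hg0 (ξ + η)
      positivity
    · rw [hPdef]
      simp only
      have hkf : (0:ℝ) < (Nat.factorial k : ℝ) := by exact_mod_cast k.factorial_pos
      have hkf1 : (1:ℝ) ≤ (Nat.factorial k : ℝ) := by exact_mod_cast k.factorial_pos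
      have e : η ^ k * (pr g (ξ + η)) ^ k = (η * pr g (ξ + η)) ^ k := (mul_pow _ _ _).symm
      rw [e]
      calc (η * pr g (ξ + η)) ^ k / ((Nat.factorial k : ℝ)) ^ 2
          ≤ (η * pr g (ξ + η)) ^ k / (Nat.factorial k : ℝ) := by
            apply div_le_div_of_nonneg_left (pow_nonneg hx k) hkf
            nlinarith
        _ = (η * pr g (ξ + η)) ^ k / (k.factorial : ℝ) := rfl
  have hlim1 : Tendsto (fun n => ∑ k ∈ Finset.range n, P k ξ η) atTop
      (nhds (∑' k, P k ξ η)) := hsum.hasSum.tendsto_sum_nat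
  have hlim2 : Tendsto (fun n => ((Wo g)^[n] m) ξ η) atTop (nhds 0) := by
    rw [← hWW]
    exact hconv ξ η hη
  have hfin : m ξ η ≤ (∑' k, P k ξ η) + 0 :=
    ge_of_tendsto' (hlim1.add hlim2) fun n => main n ξ η hη
  rw [add_zero] at hfin
  have htz : (∑' k, P k ξ η) = 1 + ∑' k, P (k+1) ξ η := by
    rw [Summable.tsum_eq_zero_add hsum]
    congr 1
    rw [hPdef]
    simp
  rw [htz] at hfin
  have : (∑' (n : ℕ), η ^ (n + 1) * (μ1 (ξ + η)) ^ (n + 1) / ((Nat.factorial (n + 1) : ℝ)) ^ 2)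
      = ∑' k, P (k+1) ξ η := by
    congr 1
    funext k
    rw [hPdef, hpr]
  rw [this]
  exact hfin
end

section
/- Let $V$ and $W$ be Volterra integral operators on $L^2(0,b)$ of the form $(Vf)(x) = \int_0^x V(x,y)f(y)\,dy$ with continuous kernels, and let $U$ be a unitary operator on $L^2(0,b)$. If $I + V^* = U(I + W^*)$, then $V = W$. -/
open MeasureTheory

open MeasureTheory Set intervalIntegral

noncomputable def Afun (Dk : ℝ → ℝ → ℝ) (α β t : ℝ) : ℝ := ∫ y in Set.Ioc α (min β t), Dk t y

noncomputable def Hfun (Dk K1 : ℝ → ℝ → ℝ) (α β x : ℝ) : ℝ :=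
  Afun Dk α β x + ∫ t in (0:ℝ)..x, K1 x t * Afun Dk α β t

theorem Afun_eq (Dk : ℝ → ℝ → ℝ) (α β t : ℝ) :
    Afun Dk α β t = ∫ y in α..(max α (min β t)), Dk t y := by
  rcases le_or_gt α (min β t) with h | h
  · rw [max_eq_right h, intervalIntegral.integral_of_le h]; rfl
  · rw [max_eq_left h.le, intervalIntegral.integral_same]
    unfold Afun
    rw [Set.Ioc_eq_empty (by exact fun hlt => absurd hlt (not_lt.2 h.le)), Measure.restrict_empty,
      integral_zero_measure]

theorem Afun_continuous {Dk : ℝ → ℝ → ℝ} (hDk : Continuous (Function.uncurry Dk)) (α β : ℝ) :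
    Continuous (Afun Dk α β) := by
  have : Continuous fun t : ℝ => ∫ y in α..(max α (min β t)), Dk t y :=
    intervalIntegral.continuous_parametric_intervalIntegral_of_continuous hDk
      (continuous_const.max (continuous_const.min continuous_id))
  simpa only [← Afun_eq] using this

theorem Afun_zero' (Dk : ℝ → ℝ → ℝ) {α β t : ℝ} (h : min β t ≤ α) : Afun Dk α β t = 0 := by
  unfold Afun
  rw [Set.Ioc_eq_empty (not_lt.2 h), Measure.restrict_empty, integral_zero_measure]

theorem Afun_zero (Dk : ℝ → ℝ → ℝ) {α β t : ℝ} (h : t ≤ α) : Afun Dk α β t = 0 :=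
  Afun_zero' Dk ((min_le_right β t).trans h)

theorem Afun_abs_le {Dk : ℝ → ℝ → ℝ} {b Mk α β t : ℝ}
    (hDk : Continuous (Function.uncurry Dk))
    (hMk : ∀ s u : ℝ, s ∈ Set.Icc 0 b → u ∈ Set.Icc 0 b → |Dk s u| ≤ Mk)
    (hMk0 : 0 ≤ Mk) (h0α : 0 ≤ α) (hαβ : α ≤ β) (hβb : β ≤ b) (ht : t ∈ Set.Icc 0 b) :
    |Afun Dk α β t| ≤ Mk * (β - α) := by
  rcases le_or_gt (min β t) α with h | h
  · rw [Afun_zero' Dk h, abs_zero]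
    exact mul_nonneg hMk0 (by linarith)
  · have hle : ∀ y ∈ Set.Ioc α (min β t), ‖Dk t y‖ ≤ Mk := by
      intro y hy
      exact hMk t y ht ⟨le_trans h0α hy.1.le, hy.2.trans ((min_le_left β t).trans hβb)⟩
    have := norm_setIntegral_le_of_norm_le_const (μ := volume) (s := Set.Ioc α (min β t))
      (f := fun y => Dk t y) (by rw [Real.volume_Ioc]; exact ENNReal.ofReal_lt_top) hle
    rw [Real.volume_real_Ioc_of_le (by linarith)] at this
    calc |Afun Dk α β t| ≤ Mk * (min β t - α) := this
    _ ≤ Mk * (β - α) := by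
        have := min_le_left β t
        exact mul_le_mul_of_nonneg_left (by linarith) hMk0

theorem Hfun_continuous {Dk K1 : ℝ → ℝ → ℝ} (hDk : Continuous (Function.uncurry Dk))
    (hK1 : Continuous (Function.uncurry K1)) (α β : ℝ) :
    Continuous (Hfun Dk K1 α β) := by
  apply (Afun_continuous hDk α β).add
  exact intervalIntegral.continuous_parametric_intervalIntegral_of_continuous
    (by exact (hK1.comp continuous_id).mul ((Afun_continuous hDk α β).comp continuous_snd))
    continuous_id

theorem Hfun_eq_zero {b : ℝ} {Dk K1 : ℝ → ℝ → ℝ} (hDk : Continuous (Function.uncurry Dk))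
    (hK1 : Continuous (Function.uncurry K1)) {α β : ℝ} (hβb : β < b)
    (hvanish : ∀ γ δ : ℝ, β ≤ γ → γ ≤ δ → δ ≤ b → ∫ x in Set.Ioc γ δ, Hfun Dk K1 α β x = 0) :
    ∀ x ∈ Set.Icc β b, Hfun Dk K1 α β x = 0 := by
  have hHc : Continuous (Hfun Dk K1 α β) := Hfun_continuous hDk hK1 α β
  have hopen : ∀ x ∈ Set.Ioo β b, Hfun Dk K1 α β x = 0 := by
    intro x hx
    have hd : HasDerivAt (fun s => ∫ u in β..s, Hfun Dk K1 α β u) (Hfun Dk K1 α β x) x :=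
      intervalIntegral.integral_hasDerivAt_right (hHc.intervalIntegrable _ _)
        (hHc.stronglyMeasurableAtFilter _ _) hHc.continuousAt
    have hev : (fun s => ∫ u in β..s, Hfun Dk K1 α β u) =ᶠ[nhds x] fun _ => 0 := by
      filter_upwards [Ioo_mem_nhds hx.1 hx.2] with s hs
      rw [intervalIntegral.integral_of_le hs.1.le]
      exact hvanish β s le_rfl hs.1.le hs.2.le
    have hd0 : HasDerivAt (fun s => ∫ u in β..s, Hfun Dk K1 α β u) 0 x :=
      (hasDerivAt_const x (0:ℝ)).congr_of_eventuallyEq hev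
    exact hd.unique hd0
  intro x hx
  have hsub : Set.Icc β b ⊆ {x | Hfun Dk K1 α β x = 0} := by
    rw [← closure_Ioo hβb.ne]
    exact closure_minimal hopen (isClosed_eq hHc continuous_const)
  exact hsub hx

theorem Afun_sq_bound {b : ℝ} {Dk K1 : ℝ → ℝ → ℝ} (hDk : Continuous (Function.uncurry Dk))
    (hK1 : Continuous (Function.uncurry K1)) {M Mk : ℝ}
    (hM : ∀ s u : ℝ, s ∈ Set.Icc 0 b → u ∈ Set.Icc 0 b → |K1 s u| ≤ M)
    (hMk : ∀ s u : ℝ, s ∈ Set.Icc 0 b → u ∈ Set.Icc 0 b → |Dk s u| ≤ Mk)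
    (hM0 : 0 < M) (hMk0 : 0 ≤ Mk) {α β x : ℝ}
    (h0α : 0 ≤ α) (hαβ : α ≤ β) (hβx : β ≤ x) (hxb : x ≤ b) (hβb : β < b)
    (hH0 : ∀ t ∈ Set.Icc β b, Hfun Dk K1 α β t = 0) :
    |Afun Dk α β x| ≤ (M * Mk * Real.exp (M * b)) * (β - α)^2 := by
  set A : ℝ → ℝ := Afun Dk α β with hA
  have hAc : Continuous A := Afun_continuous hDk α β
  have hAcabs : Continuous fun t => |A t| := hAc.abs
  set ε : ℝ := M * (Mk * (β - α)^2) with hε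
  have hε0 : 0 ≤ ε := by positivity
  -- integral of |A| over [0, β] is at most Mk (β-α)^2
  have hIa : ∫ t in (0:ℝ)..β, |A t| ≤ Mk * (β - α)^2 := by
    have hsplit : ∫ t in (0:ℝ)..β, |A t|
        = (∫ t in (0:ℝ)..α, |A t|) + ∫ t in α..β, |A t| :=
      (intervalIntegral.integral_add_adjacent_intervals (hAcabs.intervalIntegrable _ _)
        (hAcabs.intervalIntegrable _ _)).symm
    have h1 : ∫ t in (0:ℝ)..α, |A t| = 0 := by
      rw [intervalIntegral.integral_congr (g := fun _ => (0:ℝ))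
        (fun t ht => by
          rw [Set.uIcc_of_le h0α] at ht
          rw [hA, Afun_zero Dk ht.2, abs_zero])]
      simp
    have h2 : ∫ t in α..β, |A t| ≤ Mk * (β - α) * (β - α) := by
      have := intervalIntegral.norm_integral_le_of_norm_le_const (a := α) (b := β)
        (C := Mk * (β - α)) (f := fun t => |A t|) (fun t ht => by
          rw [Set.uIoc_of_le hαβ] at ht
          rw [Real.norm_eq_abs, abs_abs]
          exact Afun_abs_le hDk hMk hMk0 h0α hαβ (by linarith)
            ⟨le_trans h0α ht.1.le, le_trans ht.2 (by linarith)⟩)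
      rw [abs_of_nonneg (by linarith)] at this
      rw [Real.norm_eq_abs] at this
      exact (le_abs_self _).trans this
    rw [hsplit, h1, zero_add]
    calc ∫ t in α..β, |A t| ≤ Mk * (β - α) * (β - α) := h2
    _ = Mk * (β - α)^2 := by ring
  -- pointwise bound from H = 0
  have hAt : ∀ t ∈ Set.Icc β b, |A t| ≤ ε + M * ∫ s in β..t, |A s| := by
    intro t ht
    have h0β : (0:ℝ) ≤ β := le_trans h0α hαβ
    have h0t : (0:ℝ) ≤ t := le_trans h0β ht.1
    have h1 : A t = -∫ s in (0:ℝ)..t, K1 t s * A s := by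
      have := hH0 t ht
      unfold Hfun at this
      rw [hA]; linarith
    have h2 : |A t| ≤ ∫ s in (0:ℝ)..t, |K1 t s| * |A s| := by
      rw [h1, abs_neg]
      calc |∫ s in (0:ℝ)..t, K1 t s * A s| = ‖∫ s in (0:ℝ)..t, K1 t s * A s‖ :=
            (Real.norm_eq_abs _).symm
      _ ≤ ∫ s in (0:ℝ)..t, ‖K1 t s * A s‖ := intervalIntegral.norm_integral_le_integral_norm h0t
      _ = ∫ s in (0:ℝ)..t, |K1 t s| * |A s| := by simp [Real.norm_eq_abs, abs_mul]
    have h3 : ∫ s in (0:ℝ)..t, |K1 t s| * |A s| ≤ ∫ s in (0:ℝ)..t, M * |A s| := by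
      apply intervalIntegral.integral_mono_on h0t
      · exact (Continuous.intervalIntegrable
          (((hK1.comp (Continuous.prodMk_right t)).abs).mul hAcabs) _ _)
      · exact ((continuous_const.mul hAcabs).intervalIntegrable _ _)
      · intro s hs
        exact mul_le_mul_of_nonneg_right
          (hM t s ⟨h0t, ht.2⟩ ⟨hs.1, le_trans hs.2 ht.2⟩) (abs_nonneg _)
    have h4 : ∫ s in (0:ℝ)..t, M * |A s| = M * ((∫ s in (0:ℝ)..β, |A s|) + ∫ s in β..t, |A s|) := by
      rw [intervalIntegral.integral_const_mul,
        intervalIntegral.integral_add_adjacent_intervals (hAcabs.intervalIntegrable _ _)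
          (hAcabs.intervalIntegrable _ _)]
    calc |A t| ≤ ∫ s in (0:ℝ)..t, |K1 t s| * |A s| := h2
    _ ≤ ∫ s in (0:ℝ)..t, M * |A s| := h3
    _ = M * ((∫ s in (0:ℝ)..β, |A s|) + ∫ s in β..t, |A s|) := h4
    _ ≤ M * (Mk * (β - α)^2 + ∫ s in β..t, |A s|) := by
        apply mul_le_mul_of_nonneg_left _ hM0.le
        exact add_le_add hIa le_rfl
    _ = ε + M * ∫ s in β..t, |A s| := by rw [hε]; ring
  -- Gronwall
  set B : ℝ → ℝ := fun s => ∫ u in β..s, |A u| with hB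
  have hBnn : ∀ t, β ≤ t → 0 ≤ B t := fun t hβt =>
    intervalIntegral.integral_nonneg hβt fun u _ => abs_nonneg _
  have hgron : ∀ t ∈ Set.Icc β b, ‖B t‖ ≤ gronwallBound 0 M ε (t - β) := by
    apply norm_le_gronwallBound_of_norm_deriv_right_le (f' := fun t => |A t|)
    · exact Continuous.continuousOn (by
        exact intervalIntegral.continuous_primitive (fun _ _ => hAcabs.intervalIntegrable _ _) β)
    · intro t _
      exact (intervalIntegral.integral_hasDerivAt_right (hAcabs.intervalIntegrable _ _)
        (hAcabs.stronglyMeasurableAtFilter _ _) hAcabs.continuousAt).hasDerivWithinAt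
    · simp [hB]
    · intro t ht
      rw [Real.norm_eq_abs, abs_abs, Real.norm_eq_abs,
        abs_of_nonneg (hBnn t ht.1)]
      have := hAt t ⟨ht.1, ht.2.le⟩
      linarith
  have hBx : B x ≤ gronwallBound 0 M ε (x - β) := by
    have := hgron x ⟨hβx, hxb⟩
    rwa [Real.norm_eq_abs, abs_of_nonneg (hBnn x hβx)] at this
  have hgb : gronwallBound 0 M ε (x - β) = ε / M * (Real.exp (M * (x - β)) - 1) := by
    rw [gronwallBound_of_K_ne_0 hM0.ne']
    ring_nf
  have hfinal : |A x| ≤ ε * Real.exp (M * (x - β)) := by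
    have h1 := hAt x ⟨hβx, hxb⟩
    have h2 : M * B x ≤ M * (ε / M * (Real.exp (M * (x - β)) - 1)) :=
      mul_le_mul_of_nonneg_left (hBx.trans_eq hgb) hM0.le
    have h3 : M * (ε / M * (Real.exp (M * (x - β)) - 1)) = ε * (Real.exp (M * (x - β)) - 1) := by
      field_simp
    nlinarith [Real.exp_pos (M * (x - β))]
  calc |A x| ≤ ε * Real.exp (M * (x - β)) := hfinal
  _ ≤ ε * Real.exp (M * b) := by
      apply mul_le_mul_of_nonneg_left _ hε0
      exact Real.exp_le_exp.2 (mul_le_mul_of_nonneg_left (by linarith) hM0.le)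
  _ = (M * Mk * Real.exp (M * b)) * (β - α)^2 := by rw [hε]; ring

theorem integral_zero_of_sq_bound {g : ℝ → ℝ} (hg : Continuous g) {C y y' : ℝ}
    (hC : 0 ≤ C) (hyy : y ≤ y')
    (h : ∀ a c : ℝ, y ≤ a → a ≤ c → c ≤ y' → |∫ s in a..c, g s| ≤ C * (c - a)^2) :
    ∫ s in y..y', g s = 0 := by
  set d := y' - y with hd
  have hd0 : 0 ≤ d := by linarith
  have hbound : ∀ n : ℕ, 1 ≤ n → |∫ s in y..y', g s| ≤ C * d^2 / n := by
    intro n hn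
    have hnpos : (0:ℝ) < n := by exact_mod_cast hn
    set a : ℕ → ℝ := fun i => y + i * (d / n) with ha
    have hstep : ∀ i : ℕ, a (i+1) - a i = d / n := by
      intro i; rw [ha]; push_cast; ring
    have hmono : ∀ i j : ℕ, i ≤ j → a i ≤ a j := by
      intro i j hij
      rw [ha]; simp only
      have : (i:ℝ) ≤ j := by exact_mod_cast hij
      have := div_nonneg hd0 hnpos.le
      nlinarith
    have ha0 : a 0 = y := by simp [ha]
    have han : a n = y' := by
      rw [ha]; simp only; field_simp; linarith
    have hsum : ∑ i ∈ Finset.range n, ∫ s in a i..a (i+1), g s = ∫ s in (a 0)..(a n), g s :=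
      intervalIntegral.sum_integral_adjacent_intervals fun i _ =>
        hg.intervalIntegrable _ _
    have heach : ∀ i ∈ Finset.range n, |∫ s in a i..a (i+1), g s| ≤ C * (d / n)^2 := by
      intro i hi
      have hi' : i + 1 ≤ n := Finset.mem_range.1 hi
      have h1 : y ≤ a i := by rw [← ha0]; exact hmono 0 i (Nat.zero_le i)
      have h2 : a i ≤ a (i+1) := hmono i (i+1) (Nat.le_succ i)
      have h3 : a (i+1) ≤ y' := by rw [← han]; exact hmono (i+1) n hi'
      have := h (a i) (a (i+1)) h1 h2 h3
      rwa [hstep i] at this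
    calc |∫ s in y..y', g s| = |∑ i ∈ Finset.range n, ∫ s in a i..a (i+1), g s| := by
          rw [hsum, ha0, han]
    _ ≤ ∑ i ∈ Finset.range n, |∫ s in a i..a (i+1), g s| := Finset.abs_sum_le_sum_abs _ _
    _ ≤ ∑ _i ∈ Finset.range n, C * (d / n)^2 := Finset.sum_le_sum heach
    _ = n * (C * (d / n)^2) := by rw [Finset.sum_const, Finset.card_range]; ring
    _ = C * d^2 / n := by field_simp
  have htend : Filter.Tendsto (fun n : ℕ => C * d^2 / n) Filter.atTop (nhds 0) :=
    tendsto_const_div_atTop_nhds_zero_nat _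
  have habs : |∫ s in y..y', g s| ≤ 0 := by
    refine ge_of_tendsto htend ?_
    filter_upwards [Filter.eventually_ge_atTop 1] with n hn
    exact hbound n hn
  exact abs_eq_zero.1 (le_antisymm habs (abs_nonneg _))

theorem core_kernel_zero {b : ℝ} (hb : 0 < b) {Dk K1 : ℝ → ℝ → ℝ}
    (hDk : Continuous (Function.uncurry Dk)) (hK1 : Continuous (Function.uncurry K1))
    (hvanish : ∀ α β γ δ : ℝ, 0 ≤ α → α ≤ β → β ≤ γ → γ ≤ δ → δ ≤ b →
      ∫ x in Set.Ioc γ δ, Hfun Dk K1 α β x = 0) :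
    ∀ x y : ℝ, 0 < y → y ≤ x → x ≤ b → Dk x y = 0 := by
  -- bounds on the compact square
  obtain ⟨M0, hM0⟩ := (isCompact_Icc.prod isCompact_Icc).exists_bound_of_continuousOn
    (s := Set.Icc (0:ℝ) b ×ˢ Set.Icc (0:ℝ) b) hK1.continuousOn
  obtain ⟨Mk0, hMk0⟩ := (isCompact_Icc.prod isCompact_Icc).exists_bound_of_continuousOn
    (s := Set.Icc (0:ℝ) b ×ˢ Set.Icc (0:ℝ) b) hDk.continuousOn
  set M := max M0 1 with hM
  set Mk := max Mk0 0 with hMk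
  have hMpos : (0:ℝ) < M := lt_of_lt_of_le one_pos (le_max_right _ _)
  have hMknn : (0:ℝ) ≤ Mk := le_max_right _ _
  have hMb : ∀ s u : ℝ, s ∈ Set.Icc 0 b → u ∈ Set.Icc 0 b → |K1 s u| ≤ M := by
    intro s u hs hu
    exact le_trans (hM0 (s, u) (Set.mk_mem_prod hs hu)) (le_max_left _ _)
  have hMkb : ∀ s u : ℝ, s ∈ Set.Icc 0 b → u ∈ Set.Icc 0 b → |Dk s u| ≤ Mk := by
    intro s u hs hu
    exact le_trans (hMk0 (s, u) (Set.mk_mem_prod hs hu)) (le_max_left _ _)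
  set C := M * Mk * Real.exp (M * b) with hC
  have hCnn : 0 ≤ C := by positivity
  -- Step A : squared bound on interval integrals of Dk x
  have stepA : ∀ α β x : ℝ, 0 ≤ α → α ≤ β → β ≤ x → x < b →
      |∫ s in α..β, Dk x s| ≤ C * (β - α)^2 := by
    intro α β x h0α hαβ hβx hxb
    have hβb : β < b := lt_of_le_of_lt hβx hxb
    have hH0 := Hfun_eq_zero hDk hK1 (α := α) hβb
      (fun γ δ h1 h2 h3 => hvanish α β γ δ h0α hαβ h1 h2 h3)
    have hbnd := Afun_sq_bound hDk hK1 hMb hMkb hMpos hMknn h0α hαβ hβx hxb.le hβb hH0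
    have heqA : Afun Dk α β x = ∫ s in α..β, Dk x s := by
      unfold Afun
      rw [min_eq_left hβx, intervalIntegral.integral_of_le hαβ]
    rw [heqA] at hbnd
    exact hbnd
  -- Step B : interval integrals vanish
  have stepB : ∀ x y y' : ℝ, 0 < y → y ≤ y' → y' ≤ x → x < b →
      ∫ s in y..y', Dk x s = 0 := by
    intro x y y' hy hyy hy'x hxb
    apply integral_zero_of_sq_bound (hDk.comp (Continuous.prodMk_right x)) hCnn hyy
    intro a c h1 h2 h3
    exact stepA a c x (le_trans hy.le h1) h2 (le_trans h3 hy'x) hxb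
  -- Step C : Dk x y = 0 for 0 < y < x < b
  have stepC : ∀ x y : ℝ, 0 < y → y < x → x < b → Dk x y = 0 := by
    intro x y hy hyx hxb
    have hgc : Continuous fun s => Dk x s := hDk.comp (Continuous.prodMk_right x)
    have hd : HasDerivAt (fun s => ∫ u in (y/2)..s, Dk x u) (Dk x y) y :=
      intervalIntegral.integral_hasDerivAt_right (hgc.intervalIntegrable _ _)
        (hgc.stronglyMeasurableAtFilter _ _) hgc.continuousAt
    have hev : (fun s => ∫ u in (y/2)..s, Dk x u) =ᶠ[nhds y] fun _ => 0 := by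
      filter_upwards [Ioo_mem_nhds hy hyx] with s hs
      rcases le_or_gt (y/2) s with h | h
      · exact stepB x (y/2) s (by linarith) h hs.2.le hxb
      · rw [intervalIntegral.integral_symm]
        rw [stepB x s (y/2) hs.1 h.le (by linarith) hxb, neg_zero]
    have hd0 : HasDerivAt (fun s => ∫ u in (y/2)..s, Dk x u) 0 y :=
      (hasDerivAt_const y (0:ℝ)).congr_of_eventuallyEq hev
    exact hd.unique hd0
  -- Step D : extend to x = b
  have stepD : ∀ x y : ℝ, 0 < y → y < x → x ≤ b → Dk x y = 0 := by
    intro x y hy hyx hxb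
    have hyb : y < b := lt_of_lt_of_le hyx hxb
    have hcl : Set.Icc y b ⊆ {x | Dk x y = 0} := by
      rw [← closure_Ioo hyb.ne]
      refine closure_minimal (fun t ht => stepC t y hy ht.1 ht.2)
        (isClosed_eq (hDk.comp (continuous_id.prodMk continuous_const)) continuous_const)
    exact hcl ⟨hyx.le, hxb⟩
  -- Step E : diagonal
  intro x y hy hyx hxb
  rcases lt_or_eq_of_le hyx with h | h
  · exact stepD x y hy h hxb
  · subst h
    have hcl : Set.Icc 0 y ⊆ {u | Dk y u = 0} := by
      rw [← closure_Ioo hy.ne]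
      refine closure_minimal (fun u hu => stepD y u hu.1 hu.2 hxb)
        (isClosed_eq (hDk.comp (continuous_const.prodMk continuous_id)) continuous_const)
    exact hcl ⟨hy.le, le_refl y⟩

open scoped RealInnerProductSpace

section Plumbing

variable {b : ℝ}

theorem setint_congr {h h' : ℝ → ℝ} (hhh : h =ᵐ[volume.restrict (Set.Ioc 0 b)] h')
    {x : ℝ} (hx : x ≤ b) (K : ℝ → ℝ) :
    ∫ y in Set.Ioc 0 x, K y * h y = ∫ y in Set.Ioc 0 x, K y * h' y := by
  apply MeasureTheory.integral_congr_ae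
  have := ae_restrict_of_ae_restrict_of_subset (Set.Ioc_subset_Ioc_right hx) hhh
  filter_upwards [this] with y hy
  rw [hy]

theorem indicator_integral_eq {F : ℝ → ℝ} {α β x : ℝ} (h0α : 0 ≤ α) :
    ∫ y in Set.Ioc 0 x, F y * Set.indicator (Set.Ioc α β) (fun _ => (1:ℝ)) y
      = ∫ y in Set.Ioc α (min β x), F y := by
  have h1 : ∀ y, F y * Set.indicator (Set.Ioc α β) (fun _ => (1:ℝ)) y
      = Set.indicator (Set.Ioc α β) F y := by
    intro y
    by_cases hy : y ∈ Set.Ioc α β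
    · rw [Set.indicator_of_mem hy, Set.indicator_of_mem hy, mul_one]
    · rw [Set.indicator_of_notMem hy, Set.indicator_of_notMem hy, mul_zero]
  rw [MeasureTheory.integral_congr_ae (Filter.Eventually.of_forall h1),
    MeasureTheory.integral_indicator measurableSet_Ioc,
    Measure.restrict_restrict measurableSet_Ioc, Set.Ioc_inter_Ioc, max_eq_left h0α]

theorem Hfun_vanish_left {Dk K1 : ℝ → ℝ → ℝ} {γ δ x : ℝ} (h0x : 0 ≤ x) (hxγ : x ≤ γ) :
    Hfun Dk K1 γ δ x = 0 := by
  unfold Hfun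
  rw [Afun_zero Dk hxγ, intervalIntegral.integral_congr (g := fun _ => (0:ℝ))
    (fun t ht => by
      rw [Set.uIcc_of_le h0x] at ht
      rw [Afun_zero Dk (ht.2.trans hxγ), mul_zero]), intervalIntegral.integral_zero, add_zero]

end Plumbing

section RepLemma

variable {b : ℝ}

local notation "μb" => volume.restrict (Set.Ioc (0:ℝ) b)

theorem rep_comb {Vk Wk K1 : ℝ → ℝ → ℝ}
    (hVk : Continuous (Function.uncurry Vk)) (hWk : Continuous (Function.uncurry Wk))
    {TV TW T1 : Lp ℝ 2 μb →L[ℝ] Lp ℝ 2 μb}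
    (hTV : ∀ f, (TV f : ℝ → ℝ) =ᵐ[μb] fun x => ∫ y in Set.Ioc (0 : ℝ) x, Vk x y * f y)
    (hTW : ∀ f, (TW f : ℝ → ℝ) =ᵐ[μb] fun x => ∫ y in Set.Ioc (0 : ℝ) x, Wk x y * f y)
    (hT1 : ∀ f, (T1 f : ℝ → ℝ) =ᵐ[μb] fun x => ∫ y in Set.Ioc (0 : ℝ) x, K1 x y * f y)
    {α β : ℝ} (h0α : 0 ≤ α)
    (e : Lp ℝ 2 μb) (he : ⇑e =ᵐ[μb] Set.indicator (Set.Ioc α β) fun _ => (1:ℝ)) :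
    ⇑(((1 + T1) * (TV - TW)) e) =ᵐ[μb]
      Hfun (fun s u => Vk s u - Wk s u) K1 α β := by
  set Dk : ℝ → ℝ → ℝ := fun s u => Vk s u - Wk s u with hDk
  have hmem : ∀ᵐ x ∂μb, x ∈ Set.Ioc (0:ℝ) b := ae_restrict_mem measurableSet_Ioc
  have hDe : ⇑((TV - TW) e) =ᵐ[μb] Afun Dk α β := by
    rw [ContinuousLinearMap.sub_apply]
    filter_upwards [Lp.coeFn_sub (TV e) (TW e), hTV e, hTW e, hmem] with x h1 h2 h3 hx
    rw [h1, Pi.sub_apply, h2, h3,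
      setint_congr he hx.2 (fun y => Vk x y), setint_congr he hx.2 (fun y => Wk x y),
      indicator_integral_eq h0α, indicator_integral_eq h0α,
      ← MeasureTheory.integral_sub
        (Continuous.integrableOn_Ioc (f := fun y => Vk x y)
          (by exact hVk.comp (Continuous.prodMk_right x)))
        (Continuous.integrableOn_Ioc (f := fun y => Wk x y)
          (by exact hWk.comp (Continuous.prodMk_right x)))]
    rfl
  have hT1e : ⇑(T1 ((TV - TW) e)) =ᵐ[μb]
      fun x => ∫ t in (0:ℝ)..x, K1 x t * Afun Dk α β t := by
    filter_upwards [hT1 ((TV - TW) e), hmem] with x h1 hx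
    rw [h1, setint_congr hDe hx.2 (fun t => K1 x t),
      ← intervalIntegral.integral_of_le hx.1.le]
  have heval : ((1 + T1) * (TV - TW)) e = (TV - TW) e + T1 ((TV - TW) e) := by
    rw [ContinuousLinearMap.mul_apply, ContinuousLinearMap.add_apply,
      ContinuousLinearMap.one_apply]
  rw [heval]
  filter_upwards [Lp.coeFn_add ((TV - TW) e) (T1 ((TV - TW) e)), hDe, hT1e] with x h1 h2 h3
  rw [h1, Pi.add_apply, h2, h3]
  rfl

end RepLemma


set_option maxHeartbeats 2000000 in
open ContinuousLinearMap in
/-- If `V, W` are Volterra integral operators on `L²(0,b)` with continuous kernels,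
`U` is unitary, `I + V` and `I + W` have inverses `I + V₁`, `I + W₁` of Volterra type,
and `I + V* = U (I + W*)`, then `V = W`. -/
theorem stmt_8 (b : ℝ) (hb : 0 < b)
    (Vk Wk V1k W1k : ℝ → ℝ → ℝ)
    (hVk : Continuous (Function.uncurry Vk)) (hWk : Continuous (Function.uncurry Wk))
    (hV1k : Continuous (Function.uncurry V1k)) (hW1k : Continuous (Function.uncurry W1k))
    (TV TW TV1 TW1 U :
      Lp ℝ 2 (volume.restrict (Set.Ioc (0 : ℝ) b)) →L[ℝ]
        Lp ℝ 2 (volume.restrict (Set.Ioc (0 : ℝ) b)))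
    (hTV : ∀ f, (TV f : ℝ → ℝ) =ᵐ[volume.restrict (Set.Ioc (0 : ℝ) b)]
      fun x => ∫ y in Set.Ioc (0 : ℝ) x, Vk x y * f y)
    (hTW : ∀ f, (TW f : ℝ → ℝ) =ᵐ[volume.restrict (Set.Ioc (0 : ℝ) b)]
      fun x => ∫ y in Set.Ioc (0 : ℝ) x, Wk x y * f y)
    (hTV1 : ∀ f, (TV1 f : ℝ → ℝ) =ᵐ[volume.restrict (Set.Ioc (0 : ℝ) b)]
      fun x => ∫ y in Set.Ioc (0 : ℝ) x, V1k x y * f y)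
    (hTW1 : ∀ f, (TW1 f : ℝ → ℝ) =ᵐ[volume.restrict (Set.Ioc (0 : ℝ) b)]
      fun x => ∫ y in Set.Ioc (0 : ℝ) x, W1k x y * f y)
    (hVinv : (1 + TV) * (1 + TV1) = 1 ∧ (1 + TV1) * (1 + TV) = 1)
    (hWinv : (1 + TW) * (1 + TW1) = 1 ∧ (1 + TW1) * (1 + TW) = 1)
    (hU : ∀ f g, (inner ℝ (U f) (U g) : ℝ) = inner ℝ f g) (hUsurj : Function.Surjective U)
    (heq : 1 + ContinuousLinearMap.adjoint TV
      = U * (1 + ContinuousLinearMap.adjoint TW)) :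
    TV = TW := by
  -- Part 1 : operator algebra
  rw [← star_eq_adjoint, ← star_eq_adjoint] at heq
  have hsU : star U * U = 1 := by
    refine ContinuousLinearMap.ext fun f => ?_
    refine ext_inner_right ℝ fun g => ?_
    rw [ContinuousLinearMap.mul_apply, star_eq_adjoint, adjoint_inner_left, hU, ContinuousLinearMap.one_apply]
  have h0 : 1 + TV = (1 + TW) * star U := by
    calc 1 + TV = star (1 + star TV) := by
          simp only [star_add, star_one, star_star]
    _ = star (U * (1 + star TW)) := by rw [heq]
    _ = (1 + TW) * star U := by
          simp only [star_mul, star_add, star_one, star_star]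
  have h1 : (1 + TV) * (1 + star TV) = (1 + TW) * (1 + star TW) := by
    calc (1 + TV) * (1 + star TV) = ((1 + TW) * star U) * (U * (1 + star TW)) := by
          rw [← h0, ← heq]
    _ = (1 + TW) * ((star U * U) * (1 + star TW)) := by
          rw [mul_assoc, ← mul_assoc (star U)]
    _ = (1 + TW) * (1 + star TW) := by rw [hsU, one_mul]
  have h2 : (TV - TW) * (1 + star TV) = (1 + TW) * (star TW - star TV) := by
    have e1 : (TV - TW) * (1 + star TV)
        = (1 + TV) * (1 + star TV) - (1 + TW) * (1 + star TV) := by noncomm_ring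
    have e2 : (1 + TW) * (star TW - star TV)
        = (1 + TW) * (1 + star TW) - (1 + TW) * (1 + star TV) := by noncomm_ring
    rw [e1, e2, h1]
  have hVstar : (1 + star TV) * (1 + star TV1) = 1 := by
    calc (1 + star TV) * (1 + star TV1) = star ((1 + TV1) * (1 + TV)) := by
          simp only [star_mul, star_add, star_one]
    _ = 1 := by rw [hVinv.2, star_one]
  have h3 : ((1 + TW1) * (TV - TW)) * ((1 + star TV) * (1 + star TV1))
      = ((1 + TW1) * (1 + TW)) * ((star TW - star TV) * (1 + star TV1)) := by
    have : ((1 + TW1) * (TV - TW)) * ((1 + star TV) * (1 + star TV1))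
        = (1 + TW1) * (((TV - TW) * (1 + star TV)) * (1 + star TV1)) := by noncomm_ring
    rw [this, h2]; noncomm_ring
  rw [hVstar, mul_one, hWinv.2, one_mul] at h3
  have hKey : (1 + TW1) * (TV - TW) = -(star (TV - TW) * (1 + star TV1)) := by
    rw [h3, star_sub]; noncomm_ring
  have hinner : ∀ f g, ⟪g, ((1 + TW1) * (TV - TW)) f⟫ = -⟪((1 + TV1) * (TV - TW)) g, f⟫ := by
    intro f g
    rw [hKey, ContinuousLinearMap.neg_apply, inner_neg_right, ContinuousLinearMap.mul_apply, star_eq_adjoint, adjoint_inner_right]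
    have h4 : (1 + star TV1) f = ContinuousLinearMap.adjoint (1 + TV1) f := by
      rw [← star_eq_adjoint]
      simp only [star_add, star_one]
    rw [h4, adjoint_inner_right, ContinuousLinearMap.mul_apply]
  -- Part 2 : derive vanishing integrals
  set Dk : ℝ → ℝ → ℝ := fun s u => Vk s u - Wk s u with hDkdef
  have hDkc : Continuous (Function.uncurry Dk) := by exact hVk.sub hWk
  have hfin : ∀ γ δ : ℝ, (volume.restrict (Set.Ioc (0:ℝ) b)) (Set.Ioc γ δ) ≠ ⊤ := by
    intro γ δ
    rw [Measure.restrict_apply measurableSet_Ioc]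
    exact (lt_of_le_of_lt (measure_mono Set.inter_subset_left) measure_Ioc_lt_top).ne
  have hinner_eq : ∀ f g : Lp ℝ 2 (volume.restrict (Set.Ioc (0:ℝ) b)),
      ⟪f, g⟫ = ∫ a, ⇑f a * ⇑g a ∂(volume.restrict (Set.Ioc (0:ℝ) b)) := by
    intro f g
    rw [MeasureTheory.L2.inner_def]
    simp [RCLike.inner_apply]
    exact integral_congr_ae (Filter.Eventually.of_forall fun _ => mul_comm _ _)
  have hvanish : ∀ α β γ δ : ℝ, 0 ≤ α → α ≤ β → β ≤ γ → γ ≤ δ → δ ≤ b →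
      ∫ x in Set.Ioc γ δ, Hfun Dk W1k α β x = 0 := by
    intro α β γ δ h0α hαβ hβγ hγδ hδb
    have h0γ : 0 ≤ γ := le_trans (le_trans h0α hαβ) hβγ
    have hβb : β ≤ b := le_trans hβγ (le_trans hγδ hδb)
    set f := indicatorConstLp 2 (measurableSet_Ioc (a := α) (b := β)) (hfin α β) (1:ℝ) with hfdef
    set g := indicatorConstLp 2 (measurableSet_Ioc (a := γ) (b := δ)) (hfin γ δ) (1:ℝ) with hgdef
    have hLrep := rep_comb hVk hWk hTV hTW hTW1 h0α f indicatorConstLp_coeFn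
    have hMrep := rep_comb hVk hWk hTV hTW hTV1 h0γ g indicatorConstLp_coeFn
    have hL : ⟪g, ((1 + TW1) * (TV - TW)) f⟫ = ∫ x in Set.Ioc γ δ, Hfun Dk W1k α β x := by
      rw [hinner_eq]
      have hcongr : ∫ a, ⇑g a * ⇑(((1 + TW1) * (TV - TW)) f) a
            ∂(volume.restrict (Set.Ioc (0:ℝ) b))
          = ∫ a, Set.indicator (Set.Ioc γ δ) (Hfun Dk W1k α β) a
            ∂(volume.restrict (Set.Ioc (0:ℝ) b)) := by
        apply MeasureTheory.integral_congr_ae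
        filter_upwards [indicatorConstLp_coeFn (μ := volume.restrict (Set.Ioc (0:ℝ) b))
          (p := 2) (hs := measurableSet_Ioc (a := γ) (b := δ)) (hμs := hfin γ δ) (c := (1:ℝ)),
          hLrep] with x hx1 hx2
        rw [hx1, hx2]
        by_cases hx : x ∈ Set.Ioc γ δ
        · rw [Set.indicator_of_mem hx, Set.indicator_of_mem hx, one_mul]
        · rw [Set.indicator_of_notMem hx, Set.indicator_of_notMem hx, zero_mul]
      rw [hcongr, MeasureTheory.integral_indicator measurableSet_Ioc,
        Measure.restrict_restrict measurableSet_Ioc, Set.Ioc_inter_Ioc,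
        max_eq_left h0γ, min_eq_left hδb]
    have hR : ⟪((1 + TV1) * (TV - TW)) g, f⟫ = 0 := by
      rw [hinner_eq]
      have hcongr : ∫ a, ⇑(((1 + TV1) * (TV - TW)) g) a * ⇑f a
            ∂(volume.restrict (Set.Ioc (0:ℝ) b))
          = ∫ a, Set.indicator (Set.Ioc α β) (Hfun Dk V1k γ δ) a
            ∂(volume.restrict (Set.Ioc (0:ℝ) b)) := by
        apply MeasureTheory.integral_congr_ae
        filter_upwards [indicatorConstLp_coeFn (μ := volume.restrict (Set.Ioc (0:ℝ) b))
          (p := 2) (hs := measurableSet_Ioc (a := α) (b := β)) (hμs := hfin α β) (c := (1:ℝ)),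
          hMrep] with x hx1 hx2
        rw [hx1, hx2]
        by_cases hx : x ∈ Set.Ioc α β
        · rw [Set.indicator_of_mem hx, Set.indicator_of_mem hx, mul_one]
        · rw [Set.indicator_of_notMem hx, Set.indicator_of_notMem hx, mul_zero]
      rw [hcongr, MeasureTheory.integral_indicator measurableSet_Ioc,
        Measure.restrict_restrict measurableSet_Ioc, Set.Ioc_inter_Ioc,
        max_eq_left h0α, min_eq_left hβb]
      apply setIntegral_eq_zero_of_forall_eq_zero
      intro x hx
      exact Hfun_vanish_left (le_of_lt (lt_of_le_of_lt h0α hx.1)) (le_trans hx.2 hβγ)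
    have := hinner f g
    rw [hL, hR, neg_zero] at this
    exact this
  -- Part 3 : kernels coincide
  have hker := core_kernel_zero hb hDkc hW1k hvanish
  -- Part 4 : conclude
  apply ContinuousLinearMap.ext
  intro f
  apply Lp.ext
  filter_upwards [hTV f, hTW f, ae_restrict_mem measurableSet_Ioc] with x h1 h2 hx
  rw [h1, h2]
  apply setIntegral_congr_fun measurableSet_Ioc
  intro y hy
  have hz : Dk x y = 0 := hker x y hy.1 hy.2 hx.2
  have hvw : Vk x y = Wk x y := sub_eq_zero.mp hz
  simp only [hvw]
end

section
/- Let $f, h : \mathbb{C} \to \mathbb{C}$ be functions analytic on the open upper half-plane $\mathbb{C}_+$, continuous up to $\mathbb{R}$, nonvanishing on $\overline{\mathbb{C}_+}$ except at the same finite set of simple zeros $\{ik_j\} \subset i(0,\infty)$, with $f(k)/h(k) \to 1$ as $|k| \to \infty$ in $\overline{\mathbb{C}_+}$. If $\frac{f(k)}{h(k)} = \frac{f(-k)}{h(-k)}$ for all $k \in \mathbb{R}$, then $f \equiv h$ on $\mathbb{C}_+$. -/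
open Complex Filter Set Metric Asymptotics Topology

noncomputable section
namespace Stmt13Aux

/-- The reflection `z ↦ -conj z` (reflection across the imaginary axis). -/
def tau (z : ℂ) : ℂ := -((starRingEnd ℂ) z)

lemma tau_im (z : ℂ) : (tau z).im = z.im := by simp [tau]
lemma tau_norm (z : ℂ) : ‖tau z‖ = ‖z‖ := by simp [tau]
lemma tau_tau (z : ℂ) : tau (tau z) = z := by simp [tau]
lemma tau_continuous : Continuous tau := Complex.continuous_conj.neg
lemma tau_ofReal (x : ℝ) : tau (x : ℂ) = -(x : ℂ) := by simp [tau]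
lemma tau_fix {w : ℂ} (hw : w.re = 0) : tau w = w := by
  apply Complex.ext <;> simp [tau, hw]
lemma conj_tau (z : ℂ) : (starRingEnd ℂ) (tau z) = -z := by simp [tau]

lemma isOpenU : IsOpen {z : ℂ | 0 < z.im} := isOpen_lt continuous_const Complex.continuous_im

lemma hasDerivAt_reflect {q : ℂ → ℂ} {d w : ℂ} (hd : HasDerivAt q d (tau w)) :
    HasDerivAt (fun z => (starRingEnd ℂ) (q (tau z))) (-((starRingEnd ℂ) d)) w := by
  rw [hasDerivAt_iff_isLittleO] at hd ⊢
  have h1 := hd.comp_tendsto (tau_continuous.tendsto w)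
  rw [← isLittleO_norm_norm] at h1 ⊢
  refine h1.congr (fun z => ?_) (fun z => ?_)
  · have e : (starRingEnd ℂ) (q (tau z)) - (starRingEnd ℂ) (q (tau w))
        - (z - w) • (-((starRingEnd ℂ) d))
        = (starRingEnd ℂ) (q (tau z) - q (tau w) - (tau z - tau w) • d) := by
      simp only [smul_eq_mul, map_sub, map_mul, tau, map_neg, Complex.conj_conj]
      ring
    simp only [Function.comp_apply]
    rw [e, RCLike.norm_conj]
  · have e : tau z - tau w = (starRingEnd ℂ) (w - z) := by simp [tau]; ring
    simp only [Function.comp_apply]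
    rw [e, RCLike.norm_conj, norm_sub_rev]

/-- Hypotheses bundle for `f` and `h`. -/
structure Nice (Z : Finset ℂ) (p : ℂ → ℂ) : Prop where
  diff : DifferentiableOn ℂ p {z : ℂ | 0 < z.im}
  cont : ContinuousOn p {z : ℂ | 0 ≤ z.im}
  zero : ∀ z : ℂ, 0 ≤ z.im → (p z = 0 ↔ z ∈ Z)
  dz : ∀ z ∈ Z, deriv p z ≠ 0

variable {Z : Finset ℂ} {p q p₁ q₁ p₂ q₂ : ℂ → ℂ}

lemma mem_tau_iff (hZ : ∀ z ∈ Z, z.re = 0 ∧ 0 < z.im) {z : ℂ} : tau z ∈ Z ↔ z ∈ Z := by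
  constructor
  · intro hz
    have h1 : tau (tau z) = tau z := tau_fix (hZ _ hz).1
    rw [tau_tau] at h1
    rwa [h1]
  · intro hz
    rwa [tau_fix (hZ _ hz).1]

def Qf (p q : ℂ → ℂ) (z : ℂ) : ℂ := p z * (starRingEnd ℂ) (q (tau z))

lemma diffOn_reflect (hq : Nice Z q) :
    DifferentiableOn ℂ (fun z => (starRingEnd ℂ) (q (tau z))) {z : ℂ | 0 < z.im} := by
  intro z hz
  have h1 : DifferentiableAt ℂ q (tau z) :=
    hq.diff.differentiableAt (isOpenU.mem_nhds (by simpa [tau_im] using hz))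
  exact (hasDerivAt_reflect h1.hasDerivAt).differentiableAt.differentiableWithinAt

lemma contOn_reflect (hq : Nice Z q) :
    ContinuousOn (fun z => (starRingEnd ℂ) (q (tau z))) {z : ℂ | 0 ≤ z.im} :=
  Complex.continuous_conj.comp_continuousOn
    (hq.cont.comp tau_continuous.continuousOn (fun z hz => by simpa [tau_im] using hz))

lemma Q_diffOn (hp : Nice Z p) (hq : Nice Z q) :
    DifferentiableOn ℂ (Qf p q) {z : ℂ | 0 < z.im} :=
  hp.diff.mul (diffOn_reflect hq)

lemma Q_contOn (hp : Nice Z p) (hq : Nice Z q) :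
    ContinuousOn (Qf p q) {z : ℂ | 0 ≤ z.im} :=
  hp.cont.mul (contOn_reflect hq)

lemma Q_eq_zero_iff (hZ : ∀ z ∈ Z, z.re = 0 ∧ 0 < z.im) (hp : Nice Z p) (hq : Nice Z q)
    {z : ℂ} (hz : 0 ≤ z.im) : Qf p q z = 0 ↔ z ∈ Z := by
  rw [Qf, mul_eq_zero, map_eq_zero, hp.zero z hz, hq.zero (tau z) (by simp [tau_im, hz]),
    mem_tau_iff hZ, or_self]

lemma Q_ne_zero (hZ : ∀ z ∈ Z, z.re = 0 ∧ 0 < z.im) (hp : Nice Z p) (hq : Nice Z q)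
    {z : ℂ} (hz : 0 ≤ z.im) (hzZ : z ∉ Z) : Qf p q z ≠ 0 :=
  fun h0 => hzZ ((Q_eq_zero_iff hZ hp hq hz).1 h0)

lemma Q_slope (hZ : ∀ z ∈ Z, z.re = 0 ∧ 0 < z.im) (hp : Nice Z p) (hq : Nice Z q)
    {w : ℂ} (hw : w ∈ Z) :
    Tendsto (fun z => Qf p q z / ((z - w) * (z - w))) (𝓝[≠] w)
      (𝓝 (deriv p w * (starRingEnd ℂ) (-(deriv q w)))) := by
  have hwim : 0 < w.im := (hZ w hw).2
  have hwU : w ∈ {z : ℂ | 0 < z.im} := hwim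
  have hp0 : p w = 0 := (hp.zero w hwim.le).2 hw
  have hq0 : q w = 0 := (hq.zero w hwim.le).2 hw
  have hcw : (starRingEnd ℂ) w = -w := by
    apply Complex.ext <;> simp [(hZ w hw).1]
  have hτw : tau w = w := tau_fix (hZ w hw).1
  have hpd : HasDerivAt p (deriv p w) w :=
    (hp.diff.differentiableAt (isOpenU.mem_nhds hwU)).hasDerivAt
  have hqd : HasDerivAt q (deriv q w) w :=
    (hq.diff.differentiableAt (isOpenU.mem_nhds hwU)).hasDerivAt
  have t1 : Tendsto (slope p w) (𝓝[≠] w) (𝓝 (deriv p w)) := hasDerivAt_iff_tendsto_slope.1 hpd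
  have hτmap : Tendsto tau (𝓝[≠] w) (𝓝[≠] w) := by
    rw [tendsto_nhdsWithin_iff]
    constructor
    · simpa [hτw] using (tau_continuous.tendsto w).mono_left nhdsWithin_le_nhds
    · filter_upwards [self_mem_nhdsWithin] with z hz
      simp only [mem_compl_iff, mem_singleton_iff] at hz ⊢
      intro hc
      apply hz
      rw [← tau_tau z, hc, hτw]
  have t2 : Tendsto (fun z => (starRingEnd ℂ) (-(slope q w (tau z)))) (𝓝[≠] w)
      (𝓝 ((starRingEnd ℂ) (-(deriv q w)))) :=
    (Complex.continuous_conj.tendsto _).comp ((hasDerivAt_iff_tendsto_slope.1 hqd).comp hτmap).neg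
  refine (t1.mul t2).congr' ?_
  filter_upwards [self_mem_nhdsWithin] with z hz
  have hzw : z - w ≠ 0 := sub_ne_zero.2 hz
  have hconjzw : (starRingEnd ℂ) (tau z - w) = -(z - w) := by
    rw [map_sub, conj_tau, hcw]; ring
  calc slope p w z * (starRingEnd ℂ) (-(slope q w (tau z)))
      = (p z / (z - w)) * ((starRingEnd ℂ) (q (tau z)) / (z - w)) := by
        rw [slope_def_field, slope_def_field, hp0, hq0, sub_zero, sub_zero,
          map_neg, map_div₀, hconjzw, div_neg, neg_neg]
    _ = Qf p q z / ((z - w) * (z - w)) := by rw [div_mul_div_comm]; rfl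

/-- Regularized quotient `Qf p₁ q₁ / Qf p₂ q₂`, with removable singularities at `Z` filled in. -/
def Rhat (p₁ q₁ p₂ q₂ : ℂ → ℂ) (Z : Finset ℂ) (z : ℂ) : ℂ :=
  if z ∈ Z then
    (deriv p₁ z * (starRingEnd ℂ) (-(deriv q₁ z))) /
      (deriv p₂ z * (starRingEnd ℂ) (-(deriv q₂ z)))
  else Qf p₁ q₁ z / Qf p₂ q₂ z

variable (hZ : ∀ z ∈ Z, z.re = 0 ∧ 0 < z.im)
variable (h₁ : Nice Z p₁) (h₂ : Nice Z q₁) (h₃ : Nice Z p₂) (h₄ : Nice Z q₂)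

include hZ h₁ h₂ h₃ h₄

lemma R_tendsto {w : ℂ} (hw : w ∈ Z) :
    Tendsto (fun z => Qf p₁ q₁ z / Qf p₂ q₂ z) (𝓝[≠] w) (𝓝 (Rhat p₁ q₁ p₂ q₂ Z w)) := by
  have hden : deriv p₂ w * (starRingEnd ℂ) (-(deriv q₂ w)) ≠ 0 :=
    mul_ne_zero (h₃.dz w hw) (by rw [map_ne_zero]; exact neg_ne_zero.2 (h₄.dz w hw))
  have ht := (Q_slope hZ h₁ h₂ hw).div (Q_slope hZ h₃ h₄ hw) hden
  rw [Rhat, if_pos hw]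
  refine ht.congr' ?_
  filter_upwards [self_mem_nhdsWithin] with z hz
  have hzw : (z - w) * (z - w) ≠ 0 := mul_ne_zero (sub_ne_zero.2 hz) (sub_ne_zero.2 hz)
  rcases eq_or_ne (Qf p₂ q₂ z) 0 with h0 | h0
  · simp [h0, hzw]
  · simp only [Pi.div_apply]
    field_simp [sub_ne_zero.2 hz]

lemma Rhat_dAt_notZ {z : ℂ} (hz : 0 < z.im) (hzZ : z ∉ Z) :
    DifferentiableAt ℂ (Rhat p₁ q₁ p₂ q₂ Z) z := by
  have hQ2 : Qf p₂ q₂ z ≠ 0 := Q_ne_zero hZ h₃ h₄ hz.le hzZ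
  have hU : {y : ℂ | 0 < y.im} ∈ 𝓝 z := isOpenU.mem_nhds hz
  have hd : DifferentiableAt ℂ (fun y => Qf p₁ q₁ y / Qf p₂ q₂ y) z :=
    ((Q_diffOn h₁ h₂).differentiableAt hU).div ((Q_diffOn h₃ h₄).differentiableAt hU) hQ2
  have hev : Rhat p₁ q₁ p₂ q₂ Z =ᶠ[𝓝 z] (fun y => Qf p₁ q₁ y / Qf p₂ q₂ y) := by
    filter_upwards [Z.finite_toSet.isClosed.isOpen_compl.mem_nhds hzZ] with y hy
    rw [Rhat, if_neg (fun hyZ => hy (Finset.mem_coe.2 hyZ))]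
  exact hd.congr_of_eventuallyEq hev

lemma Rhat_contAt_Z {w : ℂ} (hw : w ∈ Z) : ContinuousAt (Rhat p₁ q₁ p₂ q₂ Z) w := by
  have hev : (fun y => Qf p₁ q₁ y / Qf p₂ q₂ y) =ᶠ[𝓝[≠] w] Rhat p₁ q₁ p₂ q₂ Z := by
    have hmem : ((↑(Z.erase w) : Set ℂ))ᶜ ∈ 𝓝 w :=
      (Z.erase w).finite_toSet.isClosed.isOpen_compl.mem_nhds (by simp)
    filter_upwards [mem_nhdsWithin_of_mem_nhds hmem, self_mem_nhdsWithin] with y hy hyw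
    have hyZ : y ∉ Z := by
      intro hyZ
      exact hy (Finset.mem_coe.2 (Finset.mem_erase.2 ⟨hyw, hyZ⟩))
    rw [Rhat, if_neg hyZ]
  have ht : Tendsto (Rhat p₁ q₁ p₂ q₂ Z) (𝓝[≠] w) (𝓝 (Rhat p₁ q₁ p₂ q₂ Z w)) :=
    (R_tendsto hZ h₁ h₂ h₃ h₄ hw).congr' hev
  rw [ContinuousAt, ← nhdsNE_sup_pure w, tendsto_sup]
  exact ⟨ht, tendsto_pure_nhds _ _⟩

lemma Rhat_diffOn : DifferentiableOn ℂ (Rhat p₁ q₁ p₂ q₂ Z) {z : ℂ | 0 < z.im} := by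
  intro z hz
  by_cases hzZ : z ∈ Z
  · set s : Set ℂ := {y : ℂ | 0 < y.im} ∩ ((↑(Z.erase z) : Set ℂ))ᶜ with hsdef
    have hso : IsOpen s := isOpenU.inter (Z.erase z).finite_toSet.isClosed.isOpen_compl
    have hzs : z ∈ s := ⟨hz, by simp⟩
    have hsnz : s ∈ 𝓝 z := hso.mem_nhds hzs
    have hdon : DifferentiableOn ℂ (Rhat p₁ q₁ p₂ q₂ Z) (s \ {z}) := by
      intro y hy
      have hyZ : y ∉ Z := by
        intro hyZ
        exact hy.1.2 (Finset.mem_coe.2 (Finset.mem_erase.2 ⟨hy.2, hyZ⟩))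
      exact (Rhat_dAt_notZ hZ h₁ h₂ h₃ h₄ hy.1.1 hyZ).differentiableWithinAt
    have := (differentiableOn_compl_singleton_and_continuousAt_iff hsnz).1
      ⟨hdon, Rhat_contAt_Z hZ h₁ h₂ h₃ h₄ hzZ⟩
    exact (this.differentiableAt hsnz).differentiableWithinAt
  · exact (Rhat_dAt_notZ hZ h₁ h₂ h₃ h₄ hz hzZ).differentiableWithinAt

lemma Rhat_contOn : ContinuousOn (Rhat p₁ q₁ p₂ q₂ Z) {z : ℂ | 0 ≤ z.im} := by
  intro z hz
  by_cases hzZ : z ∈ Z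
  · exact (Rhat_contAt_Z hZ h₁ h₂ h₃ h₄ hzZ).continuousWithinAt
  · have hQ2 : Qf p₂ q₂ z ≠ 0 := Q_ne_zero hZ h₃ h₄ hz hzZ
    have c1 : ContinuousWithinAt (fun y => Qf p₁ q₁ y / Qf p₂ q₂ y) {y : ℂ | 0 ≤ y.im} z :=
      ((Q_contOn h₁ h₂ z hz).div (Q_contOn h₃ h₄ z hz) hQ2)
    refine c1.congr_of_eventuallyEq ?_ (by rw [Rhat, if_neg hzZ])
    filter_upwards [mem_nhdsWithin_of_mem_nhds
      (Z.finite_toSet.isClosed.isOpen_compl.mem_nhds hzZ)] with y hy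
    rw [Rhat, if_neg (fun hyZ => hy (Finset.mem_coe.2 hyZ))]

lemma Rhat_ne_zero {z : ℂ} (hz : 0 ≤ z.im) : Rhat p₁ q₁ p₂ q₂ Z z ≠ 0 := by
  by_cases hzZ : z ∈ Z
  · rw [Rhat, if_pos hzZ]
    exact div_ne_zero
      (mul_ne_zero (h₁.dz z hzZ) (by rw [map_ne_zero]; exact neg_ne_zero.2 (h₂.dz z hzZ)))
      (mul_ne_zero (h₃.dz z hzZ) (by rw [map_ne_zero]; exact neg_ne_zero.2 (h₄.dz z hzZ)))
  · rw [Rhat, if_neg hzZ]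
    exact div_ne_zero (Q_ne_zero hZ h₁ h₂ hz hzZ) (Q_ne_zero hZ h₃ h₄ hz hzZ)


omit hZ h₁ h₂ h₃ h₄ in
/-- Maximum modulus principle on the upper half-plane for functions of modulus `≤ 1` on `ℝ`
and modulus `→ ≤ 1` at infinity. -/
lemma maxmod {g : ℂ → ℂ} (hd : DifferentiableOn ℂ g {z : ℂ | 0 < z.im})
    (hc : ContinuousOn g {z : ℂ | 0 ≤ z.im}) (hb : ∀ x : ℝ, ‖g (x : ℂ)‖ ≤ 1)
    (hinf : ∀ ε > (0 : ℝ), ∃ R : ℝ, ∀ z : ℂ, 0 ≤ z.im → R ≤ ‖z‖ → ‖g z‖ ≤ 1 + ε)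
    {z₀ : ℂ} (hz₀ : 0 < z₀.im) : ‖g z₀‖ ≤ 1 := by
  have hcl : IsClosed {z : ℂ | 0 ≤ z.im} := isClosed_le continuous_const Complex.continuous_im
  refine le_of_forall_pos_le_add (fun ε hε => ?_)
  obtain ⟨R, hR⟩ := hinf ε hε
  set ρ := max R (‖z₀‖ + 1) with hρdef
  set D : Set ℂ := {z : ℂ | 0 < z.im} ∩ Metric.ball 0 ρ with hDdef
  have hDo : IsOpen D := isOpenU.inter isOpen_ball
  have hz₀D : z₀ ∈ D := by
    refine ⟨hz₀, mem_ball_zero_iff.2 ?_⟩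
    have := le_max_right R (‖z₀‖ + 1)
    linarith
  have hclsub : closure D ⊆ {z : ℂ | 0 ≤ z.im} := by
    refine (closure_mono inter_subset_left).trans (closure_minimal (fun z hz => show (0:ℝ) ≤ z.im from le_of_lt hz) hcl)
  have hDb : Bornology.IsBounded D := (isBounded_ball).subset inter_subset_right
  have hdc : DiffContOnCl ℂ g D := ⟨hd.mono inter_subset_left, hc.mono hclsub⟩
  have hfr : ∀ w ∈ frontier D, ‖g w‖ ≤ 1 + ε := by
    intro w hw
    have hwc : w ∈ closure D := hw.1
    have hwim : 0 ≤ w.im := hclsub hwc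
    have hwnorm : ‖w‖ ≤ ρ := by
      have h2 : closure D ⊆ Metric.closedBall 0 ρ :=
        closure_minimal (inter_subset_right.trans ball_subset_closedBall) isClosed_closedBall
      simpa [mem_closedBall_zero_iff] using h2 hwc
    have hwnotD : w ∉ D := by
      intro hmem
      exact hw.2 (by rwa [hDo.interior_eq])
    by_cases him : w.im = 0
    · have hwre : ((w.re : ℝ) : ℂ) = w := Complex.ext (by simp) (by simp [him])
      have := hb w.re
      rw [hwre] at this
      linarith
    · have him' : 0 < w.im := lt_of_le_of_ne hwim (Ne.symm him)
      have hnlt : ¬ ‖w‖ < ρ := fun hlt => hwnotD ⟨him', mem_ball_zero_iff.2 hlt⟩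
      have hwρ : ‖w‖ = ρ := le_antisymm hwnorm (not_lt.1 hnlt)
      exact hR w hwim (by rw [hwρ]; exact le_max_left _ _)
  exact Complex.norm_le_of_forall_mem_frontier_norm_le hDb hdc hfr (subset_closure hz₀D)


omit hZ h₁ h₂ h₃ h₄ in
lemma const_one {S : ℂ → ℂ} {v : ℂ} (hv : ∀ z : ℂ, 0 < z.im → S z = v)
    (hinf : ∀ ε > (0:ℝ), ∃ R : ℝ, ∀ z : ℂ, 0 ≤ z.im → R ≤ ‖z‖ → ‖S z - 1‖ < ε) : v = 1 := by
  by_contra hv1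
  have hvpos : 0 < ‖v - 1‖ := by
    rw [norm_pos_iff]
    exact sub_ne_zero.2 hv1
  obtain ⟨R, hR⟩ := hinf _ hvpos
  set t := max R 1 with htdef
  have ht1 : (1:ℝ) ≤ t := le_max_right _ _
  have htR : R ≤ t := le_max_left _ _
  have hzim : 0 < (((t:ℝ):ℂ) * Complex.I).im := by simpa using lt_of_lt_of_le one_pos ht1
  have hnorm : ‖((t:ℝ):ℂ) * Complex.I‖ = t := by
    simp only [norm_mul, Complex.norm_I, Complex.norm_real, Real.norm_eq_abs, mul_one]
    exact abs_of_nonneg (by linarith)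
  have hlt := hR _ (le_of_lt hzim) (by rw [hnorm]; exact htR)
  rw [hv _ hzim] at hlt
  exact lt_irrefl _ hlt

end Stmt13Aux

open Stmt13Aux

/-- If `f, h` are analytic in the open upper half-plane, continuous up to `ℝ`,
vanish exactly on the same finite set of simple zeros on the positive imaginary
axis, `f/h → 1` at infinity in the closed upper half-plane, and
`f(k)/h(k) = f(-k)/h(-k)` for all real `k`, then `f ≡ h` on the upper half-plane. -/
theorem stmt_13 (f h : ℂ → ℂ) (Z : Finset ℂ)
    (hZ : ∀ z ∈ Z, z.re = 0 ∧ 0 < z.im)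
    (hf : DifferentiableOn ℂ f {z : ℂ | 0 < z.im})
    (hh : DifferentiableOn ℂ h {z : ℂ | 0 < z.im})
    (hfc : ContinuousOn f {z : ℂ | 0 ≤ z.im})
    (hhc : ContinuousOn h {z : ℂ | 0 ≤ z.im})
    (hfz : ∀ z : ℂ, 0 ≤ z.im → (f z = 0 ↔ z ∈ Z))
    (hhz : ∀ z : ℂ, 0 ≤ z.im → (h z = 0 ↔ z ∈ Z))
    (hfs : ∀ z ∈ Z, deriv f z ≠ 0) (hhs : ∀ z ∈ Z, deriv h z ≠ 0)
    (hlim : ∀ ε > (0 : ℝ), ∃ R : ℝ, ∀ z : ℂ, 0 ≤ z.im → R ≤ ‖z‖ →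
      ‖f z / h z - 1‖ < ε)
    (hrefl : ∀ x : ℝ, f x / h x = f (-x) / h (-x)) :
    ∀ z : ℂ, 0 < z.im → f z = h z := by
  classical
  have hNf : Nice Z f := ⟨hf, hfc, hfz, hfs⟩
  have hNh : Nice Z h := ⟨hh, hhc, hhz, hhs⟩
  have hfne : ∀ z : ℂ, 0 ≤ z.im → z ∉ Z → f z ≠ 0 := fun z hz hzZ h0 => hzZ ((hfz z hz).1 h0)
  have hhne : ∀ z : ℂ, 0 ≤ z.im → z ∉ Z → h z ≠ 0 := fun z hz hzZ h0 => hzZ ((hhz z hz).1 h0)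
  have hximZ : ∀ x : ℝ, (x : ℂ) ∉ Z := by
    intro x hx
    simpa using (hZ _ hx).2
  obtain ⟨RZ, hRZ⟩ : ∃ RZ : ℝ, ∀ w ∈ Z, ‖w‖ ≤ RZ := by
    obtain ⟨R, hR⟩ := (Z.finite_toSet.image (fun w => ‖w‖)).bddAbove
    exact ⟨R, fun w hw => hR ⟨w, hw, rfl⟩⟩
  have hZlarge : ∀ z : ℂ, RZ + 1 ≤ ‖z‖ → z ∉ Z := by
    intro z hz hmem
    have := hRZ z hmem
    linarith
  have hlim' : ∀ ε > (0:ℝ), ∃ R : ℝ, ∀ z : ℂ, 0 ≤ z.im → R ≤ ‖z‖ →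
      z ∉ Z ∧ ‖f z / h z - 1‖ < ε ∧ ‖f (tau z) / h (tau z) - 1‖ < ε := by
    intro ε hε
    obtain ⟨R, hR⟩ := hlim ε hε
    refine ⟨max R (RZ + 1), fun z hz hn => ?_⟩
    have hn1 : R ≤ ‖z‖ := le_trans (le_max_left _ _) hn
    have hn2 : RZ + 1 ≤ ‖z‖ := le_trans (le_max_right _ _) hn
    exact ⟨hZlarge z hn2, hR z hz hn1,
      hR (tau z) (by rw [tau_im]; exact hz) (by rw [tau_norm]; exact hn1)⟩
  set SA := Rhat f h h f Z with hSAdef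
  set SB := Rhat f f h h Z with hSBdef
  -- behaviour at infinity
  have hSAinf : ∀ ε > (0:ℝ), ∃ R : ℝ, ∀ z : ℂ, 0 ≤ z.im → R ≤ ‖z‖ → ‖SA z - 1‖ < ε := by
    intro ε hε
    have hδ0 : (0:ℝ) < min (ε/4) (1/4) := lt_min (by linarith) (by norm_num)
    set δ := min (ε/4) (1/4) with hδdef
    have hδε : 4*δ ≤ ε := by
      have := min_le_left (ε/4) (1/4); simp only [← hδdef] at this; linarith
    have hδ4 : δ ≤ 1/4 := min_le_right _ _
    obtain ⟨R, hR⟩ := hlim' δ hδ0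
    refine ⟨R, fun z hz hn => ?_⟩
    obtain ⟨hzZ, ha, hb⟩ := hR z hz hn
    have hτim : 0 ≤ (tau z).im := by rw [tau_im]; exact hz
    have hτZ : tau z ∉ Z := fun hc => hzZ ((mem_tau_iff hZ).1 hc)
    have hhz0 : h z ≠ 0 := hhne z hz hzZ
    have hfτ : f (tau z) ≠ 0 := hfne _ hτim hτZ
    have hhτ : h (tau z) ≠ 0 := hhne _ hτim hτZ
    have hcfτ : (starRingEnd ℂ) (f (tau z)) ≠ 0 := by rwa [map_ne_zero]
    have hchτ : (starRingEnd ℂ) (h (tau z)) ≠ 0 := by rwa [map_ne_zero]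
    have hcb : (starRingEnd ℂ) (f (tau z) / h (tau z)) ≠ 0 := by
      rw [map_ne_zero]; exact div_ne_zero hfτ hhτ
    have hSAz : SA z = (f z / h z) / (starRingEnd ℂ) (f (tau z) / h (tau z)) := by
      rw [hSAdef, Rhat, if_neg hzZ, Qf, Qf, map_div₀]
      field_simp
    have hb1 : ‖(starRingEnd ℂ) (f (tau z) / h (tau z)) - 1‖ < δ := by
      have e : (starRingEnd ℂ) (f (tau z) / h (tau z)) - 1
          = (starRingEnd ℂ) (f (tau z) / h (tau z) - 1) := by rw [map_sub, map_one]
      rw [e, RCLike.norm_conj]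
      exact hb
    have hcbn : 1/2 ≤ ‖(starRingEnd ℂ) (f (tau z) / h (tau z))‖ := by
      have h2 : ‖(1:ℂ)‖ - ‖(starRingEnd ℂ) (f (tau z) / h (tau z))‖
          ≤ ‖1 - (starRingEnd ℂ) (f (tau z) / h (tau z))‖ := norm_sub_norm_le _ _
      rw [norm_one, norm_sub_rev] at h2
      linarith
    rw [hSAz, div_sub_one hcb, norm_div]
    have hnum : ‖f z / h z - (starRingEnd ℂ) (f (tau z) / h (tau z))‖ < 2*δ := by
      calc ‖f z / h z - (starRingEnd ℂ) (f (tau z) / h (tau z))‖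
          = ‖(f z / h z - 1) - ((starRingEnd ℂ) (f (tau z) / h (tau z)) - 1)‖ := by
            congr 1; ring
        _ ≤ ‖f z / h z - 1‖ + ‖(starRingEnd ℂ) (f (tau z) / h (tau z)) - 1‖ := norm_sub_le _ _
        _ < 2*δ := by linarith
    rw [div_lt_iff₀ (by linarith : (0:ℝ) < ‖(starRingEnd ℂ) (f (tau z) / h (tau z))‖)]
    have hmul : ε * (1/2) ≤ ε * ‖(starRingEnd ℂ) (f (tau z) / h (tau z))‖ :=
      mul_le_mul_of_nonneg_left hcbn hε.le
    linarith
  have hSBinf : ∀ ε > (0:ℝ), ∃ R : ℝ, ∀ z : ℂ, 0 ≤ z.im → R ≤ ‖z‖ → ‖SB z - 1‖ < ε := by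
    intro ε hε
    have hδ0 : (0:ℝ) < min (ε/4) (1/4) := lt_min (by linarith) (by norm_num)
    set δ := min (ε/4) (1/4) with hδdef
    have hδε : 4*δ ≤ ε := by
      have := min_le_left (ε/4) (1/4); simp only [← hδdef] at this; linarith
    have hδ4 : δ ≤ 1/4 := min_le_right _ _
    obtain ⟨R, hR⟩ := hlim' δ hδ0
    refine ⟨R, fun z hz hn => ?_⟩
    obtain ⟨hzZ, ha, hb⟩ := hR z hz hn
    have hτim : 0 ≤ (tau z).im := by rw [tau_im]; exact hz
    have hτZ : tau z ∉ Z := fun hc => hzZ ((mem_tau_iff hZ).1 hc)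
    have hhz0 : h z ≠ 0 := hhne z hz hzZ
    have hfτ : f (tau z) ≠ 0 := hfne _ hτim hτZ
    have hhτ : h (tau z) ≠ 0 := hhne _ hτim hτZ
    have hcfτ : (starRingEnd ℂ) (f (tau z)) ≠ 0 := by rwa [map_ne_zero]
    have hchτ : (starRingEnd ℂ) (h (tau z)) ≠ 0 := by rwa [map_ne_zero]
    have hSBz : SB z = (f z / h z) * (starRingEnd ℂ) (f (tau z) / h (tau z)) := by
      rw [hSBdef, Rhat, if_neg hzZ, Qf, Qf, map_div₀]
      field_simp
    have hb1 : ‖(starRingEnd ℂ) (f (tau z) / h (tau z)) - 1‖ < δ := by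
      have e : (starRingEnd ℂ) (f (tau z) / h (tau z)) - 1
          = (starRingEnd ℂ) (f (tau z) / h (tau z) - 1) := by rw [map_sub, map_one]
      rw [e, RCLike.norm_conj]
      exact hb
    have hcbn : ‖(starRingEnd ℂ) (f (tau z) / h (tau z))‖ ≤ 1 + δ := by
      have h2 := norm_add_le ((starRingEnd ℂ) (f (tau z) / h (tau z)) - 1) 1
      simp only [sub_add_cancel, norm_one] at h2
      linarith
    rw [hSBz]
    have he : (f z / h z) * (starRingEnd ℂ) (f (tau z) / h (tau z)) - 1
        = (f z / h z - 1) * (starRingEnd ℂ) (f (tau z) / h (tau z))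
          + ((starRingEnd ℂ) (f (tau z) / h (tau z)) - 1) := by ring
    rw [he]
    calc ‖_ + _‖ ≤ ‖(f z / h z - 1) * (starRingEnd ℂ) (f (tau z) / h (tau z))‖
          + ‖(starRingEnd ℂ) (f (tau z) / h (tau z)) - 1‖ := norm_add_le _ _
      _ < ε := by
          rw [norm_mul]
          have h3 : ‖f z / h z - 1‖ * ‖(starRingEnd ℂ) (f (tau z) / h (tau z))‖
              ≤ ‖f z / h z - 1‖ * (1 + δ) := by
            exact mul_le_mul_of_nonneg_left hcbn (norm_nonneg _)
          have h4 : ‖f z / h z - 1‖ * (1 + δ) ≤ δ * (1 + δ) := by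
            exact mul_le_mul_of_nonneg_right ha.le (by linarith)
          nlinarith
  -- boundary values
  have hSA_real : ∀ x : ℝ, ‖SA (x:ℂ)‖ = 1 := by
    intro x
    have hxZ := hximZ x
    have hmxZ : (-(x:ℂ)) ∉ Z := by
      have := hximZ (-x); rwa [Complex.ofReal_neg] at this
    have hxim : (0:ℝ) ≤ (x:ℂ).im := by simp
    have hmxim : (0:ℝ) ≤ (-(x:ℂ)).im := by simp
    have hhx : h x ≠ 0 := hhne _ hxim hxZ
    have hfmx : f (-(x:ℂ)) ≠ 0 := hfne _ hmxim hmxZ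
    have hhmx : h (-(x:ℂ)) ≠ 0 := hhne _ hmxim hmxZ
    have hcross : f x * h (-(x:ℂ)) = f (-(x:ℂ)) * h x := by
      have h1 := hrefl x
      rwa [div_eq_div_iff hhx hhmx] at h1
    rw [hSAdef, Rhat, if_neg hxZ, Qf, Qf, tau_ofReal, norm_div, norm_mul, norm_mul,
      RCLike.norm_conj, RCLike.norm_conj]
    have hnormeq : ‖f (x:ℂ)‖ * ‖h (-(x:ℂ))‖ = ‖f (-(x:ℂ))‖ * ‖h (x:ℂ)‖ := by
      have h2 := congrArg norm hcross
      rwa [norm_mul, norm_mul] at h2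
    have hden : ‖h (x:ℂ)‖ * ‖f (-(x:ℂ))‖ ≠ 0 :=
      mul_ne_zero (norm_ne_zero_iff.2 hhx) (norm_ne_zero_iff.2 hfmx)
    rw [div_eq_one_iff_eq hden]
    linarith [hnormeq]
  have hSB_real : ∀ x : ℝ, (SB (x:ℂ)).im = 0 := by
    intro x
    have hxZ := hximZ x
    rw [hSBdef, Rhat, if_neg hxZ, Qf, Qf, tau_ofReal]
    have e : f ↑x * (starRingEnd ℂ) (f (-↑x)) / (h ↑x * (starRingEnd ℂ) (h (-↑x)))
        = (f ↑x / h ↑x) * (starRingEnd ℂ) (f (-↑x) / h (-↑x)) := by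
      rw [map_div₀, mul_div_mul_comm]
    rw [e, ← hrefl x, Complex.mul_conj]
    exact Complex.ofReal_im _
  -- regularity of SA, SB
  have hSAd : DifferentiableOn ℂ SA {z:ℂ|0<z.im} := Rhat_diffOn hZ hNf hNh hNh hNf
  have hSAc : ContinuousOn SA {z:ℂ|0≤z.im} := Rhat_contOn hZ hNf hNh hNh hNf
  have hSAne : ∀ z:ℂ, 0 ≤ z.im → SA z ≠ 0 := fun z hz => Rhat_ne_zero hZ hNf hNh hNh hNf hz
  have hSBd : DifferentiableOn ℂ SB {z:ℂ|0<z.im} := Rhat_diffOn hZ hNf hNf hNh hNh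
  have hSBc : ContinuousOn SB {z:ℂ|0≤z.im} := Rhat_contOn hZ hNf hNf hNh hNh
  -- |SA| = 1 on U
  have hA1 : ∀ z:ℂ, 0 < z.im → ‖SA z‖ ≤ 1 := by
    intro z hz
    refine maxmod hSAd hSAc (fun x => le_of_eq (hSA_real x)) ?_ hz
    intro ε hε
    obtain ⟨R, hR⟩ := hSAinf ε hε
    refine ⟨R, fun w hw hn => ?_⟩
    have h1 := hR w hw hn
    have h2 : ‖SA w‖ ≤ ‖SA w - 1‖ + 1 := by
      have := norm_add_le (SA w - 1) 1
      simpa using this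
    linarith
  have hA2 : ∀ z:ℂ, 0 < z.im → 1 ≤ ‖SA z‖ := by
    intro z hz
    have hd2 : DifferentiableOn ℂ (fun y => (SA y)⁻¹) {z:ℂ|0<z.im} :=
      hSAd.inv (fun y hy => hSAne y (le_of_lt hy))
    have hc2 : ContinuousOn (fun y => (SA y)⁻¹) {z:ℂ|0≤z.im} :=
      hSAc.inv₀ (fun y hy => hSAne y hy)
    have hb2 : ∀ x:ℝ, ‖(SA (x:ℂ))⁻¹‖ ≤ 1 := fun x => by
      rw [norm_inv, hSA_real, inv_one]
    have hinf2 : ∀ ε > (0:ℝ), ∃ R, ∀ w:ℂ, 0 ≤ w.im → R ≤ ‖w‖ → ‖(SA w)⁻¹‖ ≤ 1+ε := by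
      intro ε hε
      have hδ0 : (0:ℝ) < min (ε/2) (1/2) := lt_min (by linarith) (by norm_num)
      set δ := min (ε/2) (1/2) with hδdef
      have hδa : δ ≤ ε/2 := min_le_left _ _
      have hδb : δ ≤ 1/2 := min_le_right _ _
      obtain ⟨R, hR⟩ := hSAinf δ hδ0
      refine ⟨R, fun w hw hn => ?_⟩
      have h1 := hR w hw hn
      have h2 : 1 - δ ≤ ‖SA w‖ := by
        have h3 : ‖(1:ℂ)‖ - ‖SA w‖ ≤ ‖1 - SA w‖ := norm_sub_norm_le _ _
        rw [norm_one, norm_sub_rev] at h3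
        linarith
      have h3 : (0:ℝ) < ‖SA w‖ := by linarith
      rw [norm_inv, inv_eq_one_div, div_le_iff₀ h3]
      have h4 : (1+ε) * (1-δ) ≤ (1+ε) * ‖SA w‖ :=
        mul_le_mul_of_nonneg_left h2 (by linarith)
      have h5 : ε * δ ≤ ε * (1/2) := mul_le_mul_of_nonneg_left hδb hε.le
      nlinarith
    have hle := maxmod hd2 hc2 hb2 hinf2 hz
    rw [norm_inv] at hle
    have hpos : 0 < ‖SA z‖ := norm_pos_iff.2 (hSAne z hz.le)
    have h6 := mul_le_mul_of_nonneg_left hle hpos.le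
    rw [mul_inv_cancel₀ (ne_of_gt hpos), mul_one] at h6
    exact h6
  -- SA ≡ 1
  have hSAeq1 : ∀ z:ℂ, 0 < z.im → SA z = 1 := by
    rcases ((hSAd.analyticOnNhd isOpenU).is_constant_or_isOpen
        (convex_halfSpace_im_gt 0).isPreconnected) with ⟨v, hv⟩ | hopen
    · have hv' : ∀ z:ℂ, 0 < z.im → SA z = v := fun z hz => hv z hz
      have hv1 : v = 1 := const_one hv' hSAinf
      intro z hz
      rw [hv' z hz, hv1]
    · exfalso
      have hIU : Complex.I ∈ {z:ℂ|0<z.im} := by simp [Complex.I_im]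
      have himg : IsOpen (SA '' {z:ℂ|0<z.im}) := hopen _ subset_rfl isOpenU
      obtain ⟨δ, hδ, hball⟩ := Metric.isOpen_iff.1 himg _ ⟨Complex.I, hIU, rfl⟩
      have hnormI : ‖SA Complex.I‖ = 1 :=
        le_antisymm (hA1 _ (by simp)) (hA2 _ (by simp))
      have hpt : ((1+δ/2 : ℝ) : ℂ) * SA Complex.I ∈ Metric.ball (SA Complex.I) δ := by
        rw [mem_ball, dist_eq_norm]
        have e : ((1+δ/2:ℝ):ℂ) * SA Complex.I - SA Complex.I
            = (((δ/2:ℝ)):ℂ) * SA Complex.I := by push_cast; ring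
        rw [e, norm_mul, hnormI, mul_one, Complex.norm_real, Real.norm_eq_abs,
          abs_of_pos (by linarith)]
        linarith
      obtain ⟨y, hyU, hy⟩ := hball hpt
      have h1 : ‖SA y‖ = 1 := le_antisymm (hA1 y hyU) (hA2 y hyU)
      rw [hy, norm_mul, hnormI, mul_one, Complex.norm_real, Real.norm_eq_abs,
        abs_of_pos (by linarith)] at h1
      linarith
  -- Im SB = 0 on U
  have hSBim0 : ∀ z:ℂ, 0 < z.im → (SB z).im = 0 := by
    have hinfE : ∀ (c:ℂ), ‖c‖ = 1 → ∀ ε > (0:ℝ), ∃ R, ∀ w:ℂ, 0 ≤ w.im → R ≤ ‖w‖ →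
        ‖Complex.exp (c*(SB w - 1))‖ ≤ 1+ε := by
      intro c hc ε hε
      obtain ⟨R, hR⟩ := hSBinf (Real.log (1+ε)) (Real.log_pos (by linarith))
      refine ⟨R, fun w hw hn => ?_⟩
      have h1 := hR w hw hn
      rw [Complex.norm_exp]
      have h2 : (c*(SB w - 1)).re ≤ Real.log (1+ε) := by
        calc (c*(SB w - 1)).re ≤ ‖c*(SB w - 1)‖ := Complex.re_le_norm _
          _ = ‖SB w - 1‖ := by rw [norm_mul, hc, one_mul]
          _ ≤ Real.log (1+ε) := h1.le
      calc Real.exp _ ≤ Real.exp (Real.log (1+ε)) := Real.exp_le_exp.2 h2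
        _ = 1+ε := Real.exp_log (by linarith)
    have hdE : ∀ c:ℂ, DifferentiableOn ℂ (fun w => Complex.exp (c*(SB w - 1))) {z:ℂ|0<z.im} :=
      fun c => ((hSBd.sub (differentiableOn_const 1)).const_mul c).cexp
    have hcE : ∀ c:ℂ, ContinuousOn (fun w => Complex.exp (c*(SB w - 1))) {z:ℂ|0≤z.im} :=
      fun c => (continuousOn_const.mul (hSBc.sub continuousOn_const)).cexp
    have hbE1 : ∀ x:ℝ, ‖Complex.exp (Complex.I*(SB (x:ℂ) - 1))‖ ≤ 1 := by
      intro x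
      rw [Complex.norm_exp]
      have e : (Complex.I*(SB (x:ℂ) - 1)).re = 0 := by
        rw [Complex.mul_re, Complex.I_re, Complex.I_im]
        simp [Complex.sub_im, Complex.one_im, hSB_real x]
      rw [e, Real.exp_zero]
    have hbE2 : ∀ x:ℝ, ‖Complex.exp ((-Complex.I)*(SB (x:ℂ) - 1))‖ ≤ 1 := by
      intro x
      rw [Complex.norm_exp]
      have e : ((-Complex.I)*(SB (x:ℂ) - 1)).re = 0 := by
        rw [Complex.mul_re]
        simp [Complex.sub_im, Complex.one_im, hSB_real x]
      rw [e, Real.exp_zero]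
    intro z hz
    have hE1 := maxmod (hdE Complex.I) (hcE Complex.I) hbE1
      (hinfE Complex.I (by simp)) hz
    have hE2 := maxmod (hdE (-Complex.I)) (hcE (-Complex.I)) hbE2
      (hinfE (-Complex.I) (by simp)) hz
    rw [Complex.norm_exp, Real.exp_le_one_iff] at hE1 hE2
    have e1 : (Complex.I*(SB z - 1)).re = -(SB z).im := by
      rw [Complex.mul_re, Complex.I_re, Complex.I_im]
      simp [Complex.sub_im, Complex.one_im]
    have e2 : ((-Complex.I)*(SB z - 1)).re = (SB z).im := by
      rw [Complex.mul_re]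
      simp [Complex.sub_im, Complex.one_im]
    rw [e1] at hE1
    rw [e2] at hE2
    linarith
  -- SB ≡ 1
  have hSBeq1 : ∀ z:ℂ, 0 < z.im → SB z = 1 := by
    rcases ((hSBd.analyticOnNhd isOpenU).is_constant_or_isOpen
        (convex_halfSpace_im_gt 0).isPreconnected) with ⟨v, hv⟩ | hopen
    · have hv' : ∀ z:ℂ, 0 < z.im → SB z = v := fun z hz => hv z hz
      have hv1 : v = 1 := const_one hv' hSBinf
      intro z hz
      rw [hv' z hz, hv1]
    · exfalso
      have hIU : Complex.I ∈ {z:ℂ|0<z.im} := by simp [Complex.I_im]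
      have himg : IsOpen (SB '' {z:ℂ|0<z.im}) := hopen _ subset_rfl isOpenU
      obtain ⟨δ, hδ, hball⟩ := Metric.isOpen_iff.1 himg _ ⟨Complex.I, hIU, rfl⟩
      have hpt : SB Complex.I + (((δ/2:ℝ)):ℂ) * Complex.I ∈ Metric.ball (SB Complex.I) δ := by
        rw [mem_ball, dist_eq_norm]
        have e : SB Complex.I + (((δ/2:ℝ)):ℂ) * Complex.I - SB Complex.I
            = (((δ/2:ℝ)):ℂ) * Complex.I := by ring
        rw [e]
        simp only [norm_mul, Complex.norm_I, Complex.norm_real, Real.norm_eq_abs, mul_one]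
        rw [abs_of_pos (by linarith)]
        linarith
      obtain ⟨y, hyU, hy⟩ := hball hpt
      have h1 : (SB y).im = 0 := hSBim0 y hyU
      rw [hy] at h1
      simp only [Complex.add_im, Complex.mul_im, Complex.I_re, Complex.I_im,
        Complex.ofReal_re, Complex.ofReal_im] at h1
      have h2 : (SB Complex.I).im = 0 := hSBim0 _ (by simp)
      rw [h2] at h1
      linarith
  -- the two functional equations off Z
  have hsq : ∀ z:ℂ, 0 < z.im → z ∉ Z → f z * f z = h z * h z := by
    intro z hz hzZ
    have h1 := hSAeq1 z hz
    have h2 := hSBeq1 z hz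
    rw [hSAdef, Rhat, if_neg hzZ,
      div_eq_one_iff_eq (Q_ne_zero hZ hNh hNf hz.le hzZ)] at h1
    rw [hSBdef, Rhat, if_neg hzZ,
      div_eq_one_iff_eq (Q_ne_zero hZ hNh hNh hz.le hzZ)] at h2
    simp only [Qf] at h1 h2
    have hτim : 0 ≤ (tau z).im := by rw [tau_im]; exact hz.le
    have hτZ : tau z ∉ Z := fun hc => hzZ ((mem_tau_iff hZ).1 hc)
    have hcf : (starRingEnd ℂ) (f (tau z)) ≠ 0 := by
      rw [map_ne_zero]; exact hfne _ hτim hτZ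
    apply mul_right_cancel₀ hcf
    linear_combination f z * h2 + h z * h1
  -- far region: f = h
  obtain ⟨R₂, hR₂⟩ := hlim' (1/2) (by norm_num)
  set T := max R₂ 0 + 1 with hTdef
  have hfar : ∀ z:ℂ, 0 < z.im → T ≤ ‖z‖ → f z = h z := by
    intro z hz hn
    have hn2 : R₂ ≤ ‖z‖ := by
      have := le_max_left R₂ 0
      rw [hTdef] at hn
      linarith
    obtain ⟨hzZ, ha, -⟩ := hR₂ z hz.le hn2
    have hh0 : h z ≠ 0 := hhne z hz.le hzZ
    have h5 : (f z - h z) * (f z + h z) = 0 := by linear_combination hsq z hz hzZ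
    rcases mul_eq_zero.1 h5 with h6 | h6
    · exact sub_eq_zero.1 h6
    · exfalso
      have hfz' : f z = -h z := eq_neg_of_add_eq_zero_left h6
      rw [hfz', neg_div, div_self hh0] at ha
      have e : (-1:ℂ) - 1 = -2 := by ring
      rw [e, norm_neg] at ha
      have : ‖(2:ℂ)‖ = 2 := by
        norm_num
      rw [this] at ha
      linarith
  -- identity theorem
  set t₁ := max T 0 + 1 with ht₁def
  have ht₁pos : 0 < t₁ := by
    have := le_max_right T 0
    rw [ht₁def]
    linarith
  have hz₁im : 0 < (((t₁:ℝ):ℂ) * Complex.I).im := by simpa using ht₁pos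
  have hz₁norm : ‖((t₁:ℝ):ℂ) * Complex.I‖ = t₁ := by
    simp only [norm_mul, Complex.norm_I, Complex.norm_real, Real.norm_eq_abs, mul_one]
    exact abs_of_pos ht₁pos
  have hVo : IsOpen ({z:ℂ|0<z.im} ∩ {z:ℂ| T < ‖z‖}) :=
    isOpenU.inter (isOpen_lt continuous_const continuous_norm)
  have hz₁V : ((t₁:ℝ):ℂ) * Complex.I ∈ ({z:ℂ|0<z.im} ∩ {z:ℂ| T < ‖z‖}) := by
    refine ⟨hz₁im, ?_⟩
    rw [mem_setOf_eq, hz₁norm, ht₁def]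
    have := le_max_left T 0
    linarith
  have hev : (fun z => f z - h z) =ᶠ[𝓝 (((t₁:ℝ):ℂ) * Complex.I)] 0 := by
    filter_upwards [hVo.mem_nhds hz₁V] with y hy
    have : f y = h y := hfar y hy.1 (le_of_lt hy.2)
    simp [this]
  have heq := ((hf.sub hh).analyticOnNhd isOpenU).eqOn_zero_of_preconnected_of_eventuallyEq_zero
    (convex_halfSpace_im_gt 0).isPreconnected hz₁im hev
  intro z hz
  have h7 := heq hz
  simpa [sub_eq_zero] using h7
end
end

section
/- Suppose $A \in L^1(\mathbb{R}_+)$ and $f(k) := 1 + \int_0^{\infty} A(y)e^{iky}\,dy$ for $k$ in the closed upper half-plane, and suppose $f(ik_j) = 0$ for some $k_j > 0$. Then for real $k$, $\frac{f(k)}{k - ik_j} = \int_0^{\infty} h_j(s)e^{iks}\,ds$ where $h_j(s) := i\int_0^{\infty} A(t+s)e^{-k_j t}\,dt$, and $h_j \in L^1(\mathbb{R}_+)$. -/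
open MeasureTheory
open Set in

lemma stmt16_core (g : ℝ → ℂ) (hm : Measurable g) (hg : Integrable g)
    (kj : ℝ) (hkj : 0 < kj)
    (hzero : 1 + (∫ y in Ioi (0 : ℝ),
      g y * Complex.exp (Complex.I * (Complex.I * kj) * y)) = 0) :
    IntegrableOn
      (fun s : ℝ => Complex.I * ∫ t in Ioi (0 : ℝ),
        g (t + s) * Complex.exp (-(kj : ℂ) * t)) (Ioi 0) ∧
    ∀ k : ℝ,
      (1 + ∫ y in Ioi (0 : ℝ), g y * Complex.exp (Complex.I * k * y))
          / ((k : ℂ) - Complex.I * kj)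
        = ∫ s in Ioi (0 : ℝ),
            (Complex.I * ∫ t in Ioi (0 : ℝ),
              g (t + s) * Complex.exp (-(kj : ℂ) * t))
              * Complex.exp (Complex.I * k * s) := by
  set μ : Measure ℝ := volume.restrict (Ioi 0) with hμ
  set Φ : ℝ → ℝ × ℝ → ℂ := fun k p =>
    (if p.1 < p.2 then g p.2 * (Real.exp (kj * (p.1 - p.2)) : ℝ) else 0)
      * Complex.exp (Complex.I * k * p.1) with hΦ
  have hc : ∀ k : ℝ, ((kj : ℂ) + Complex.I * k) ≠ 0 := by
    intro k h
    have := congrArg Complex.re h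
    simp at this; nlinarith
  have hmΦ : ∀ k : ℝ, Measurable (Φ k) := by
    intro k
    apply Measurable.mul
    · exact Measurable.ite (measurableSet_lt measurable_fst measurable_snd)
        ((hm.comp measurable_snd).mul (Complex.measurable_ofReal.comp
          (Real.measurable_exp.comp ((measurable_fst.sub measurable_snd).const_mul kj))))
        measurable_const
    · exact Complex.measurable_exp.comp
        ((Complex.measurable_ofReal.comp measurable_fst).const_mul (Complex.I * k))
  have hnorm : ∀ (k : ℝ) (s y : ℝ), ‖Φ k (s, y)‖ =
      (if s < y then ‖g y‖ * Real.exp (kj * (s - y)) else 0) := by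
    intro k s y
    by_cases h : s < y
    · simp only [hΦ, if_pos h, norm_mul, Complex.norm_exp,
        Complex.norm_real, Real.norm_eq_abs, abs_of_pos (Real.exp_pos _)]
      have : (Complex.I * k * s).re = 0 := by
        simp [Complex.mul_re, Complex.mul_im]
      rw [this, Real.exp_zero, mul_one]
    · simp [hΦ, h]
  have hΦint : ∀ k : ℝ, Integrable (Φ k) (μ.prod μ) := by
    intro k
    rw [integrable_prod_iff' ((hmΦ k).aestronglyMeasurable)]
    constructor
    · refine Filter.Eventually.of_forall fun y => ?_
      have hfun : (fun s => Φ k (s, y)) = Set.indicator (Iio y)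
          (fun s => g y * (Real.exp (kj * (s - y)) : ℝ)
            * Complex.exp (Complex.I * k * s)) := by
        funext s; by_cases h : s < y <;> simp [hΦ, Set.indicator, h]
      rw [hfun, integrable_indicator_iff measurableSet_Iio]
      rw [IntegrableOn, hμ, Measure.restrict_restrict measurableSet_Iio, Set.Iio_inter_Ioi]
      have hcont : Continuous (fun s : ℝ => g y * (Real.exp (kj * (s - y)) : ℝ)
          * Complex.exp (Complex.I * k * s)) := by fun_prop
      exact (hcont.integrableOn_Icc).mono_set Ioo_subset_Icc_self
    · apply Integrable.mono' ((hg.norm.mul_const kj⁻¹).restrict)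
      · exact ((hmΦ k).stronglyMeasurable.norm.integral_prod_left').aestronglyMeasurable
      · filter_upwards [ae_restrict_mem measurableSet_Ioi] with y hy
        have hy' : (0:ℝ) < y := hy
        have hE : (1:ℝ) ≤ Real.exp (kj * y) := by
          rw [← Real.exp_zero]; exact Real.exp_le_exp.mpr (by positivity)
        have hfun : (fun s => ‖Φ k (s, y)‖) = Set.indicator (Iio y)
            (fun s => ‖g y‖ * Real.exp (kj * (s - y))) := by
          funext s; rw [hnorm]; by_cases h : s < y <;> simp [Set.indicator, h]
        have hexp : ∫ s in Ioo (0:ℝ) y, Real.exp (kj * s)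
            = (Real.exp (kj * y) - 1) / kj := by
          rw [← integral_Ioc_eq_integral_Ioo, ← intervalIntegral.integral_of_le hy'.le]
          rw [intervalIntegral.integral_comp_mul_left (fun x => Real.exp x) (ne_of_gt hkj)]
          simp [smul_eq_mul]; ring
        have hval : ∫ s, ‖Φ k (s, y)‖ ∂μ
            = ‖g y‖ * ((Real.exp (kj * y) - 1) / kj / Real.exp (kj * y)) := by
          rw [hfun, hμ, integral_indicator measurableSet_Iio,
            Measure.restrict_restrict measurableSet_Iio, Iio_inter_Ioi]
          simp_rw [mul_sub, Real.exp_sub, div_eq_mul_inv, ← mul_assoc]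
          rw [integral_mul_const, integral_const_mul, hexp]
          ring
        rw [hval, Real.norm_eq_abs, abs_of_nonneg (mul_nonneg (norm_nonneg _)
          (div_nonneg (div_nonneg (by linarith) hkj.le) (Real.exp_pos _).le))]
        have hb : (Real.exp (kj * y) - 1) / kj / Real.exp (kj * y) ≤ kj⁻¹ := by
          rw [div_div, div_le_iff₀ (by positivity)]
          have h2 : kj⁻¹ * (kj * Real.exp (kj * y)) = Real.exp (kj * y) := by
            field_simp
          rw [h2]; linarith
        exact mul_le_mul_of_nonneg_left hb (norm_nonneg _)
  have key0 : ∀ (k : ℝ), ∀ s ∈ Ioi (0:ℝ),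
      (∫ y, Φ k (s, y) ∂μ)
        = (∫ t in Ioi (0 : ℝ), g (t + s) * Complex.exp (-(kj : ℂ) * t))
            * Complex.exp (Complex.I * k * s) := by
    intro k s hs
    have hfun : (fun y => Φ k (s, y)) = Set.indicator (Ioi s)
        (fun y => g y * (Real.exp (kj * (s - y)) : ℝ)
          * Complex.exp (Complex.I * k * s)) := by
      funext y; by_cases h : s < y <;> simp [hΦ, Set.indicator, h, mem_Ioi]
    rw [hfun, hμ, integral_indicator measurableSet_Ioi,
      Measure.restrict_restrict measurableSet_Ioi, Set.Ioi_inter_Ioi,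
      sup_eq_left.mpr (le_of_lt hs)]
    rw [integral_mul_const]
    congr 1
    have hshift := (measurePreserving_add_right (volume : Measure ℝ) s).setIntegral_preimage_emb
        (measurableEmbedding_addRight s)
        (fun y => g y * (Real.exp (kj * (s - y)) : ℝ)) (Ioi s)
    simp only [preimage_add_const_Ioi, sub_self] at hshift
    rw [← hshift]
    apply setIntegral_congr_fun measurableSet_Ioi
    intro t _
    simp only
    congr 1
    rw [Complex.ofReal_exp]
    congr 1
    push_cast; ring
  constructor
  · have h1 : Integrable (fun s => ∫ y, Φ 0 (s, y) ∂μ) μ := (hΦint 0).integral_prod_left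
    apply (h1.const_mul Complex.I).congr
    filter_upwards [ae_restrict_mem measurableSet_Ioi] with s hs
    rw [key0 0 s hs]
    simp [hμ]
  · intro k
    have hk' : ((k : ℂ) - Complex.I * kj) ≠ 0 := by
      intro h
      have := congrArg Complex.im h
      simp at this; nlinarith
    set c : ℂ := (kj : ℂ) + Complex.I * k with hcdef
    have hint_exp : ∀ c' : ℂ, c'.re ≤ 0 →
        Integrable (fun y => g y * Complex.exp (c' * y)) μ := by
      intro c' hc'
      apply Integrable.mono' (hg.norm.restrict (s := Ioi 0))
      · exact (hm.mul (Complex.measurable_exp.comp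
          ((Complex.measurable_ofReal.const_mul c')))).aestronglyMeasurable
      · filter_upwards [ae_restrict_mem measurableSet_Ioi] with y hy
        rw [norm_mul]
        have h1 : ‖Complex.exp (c' * y)‖ ≤ 1 := by
          rw [Complex.norm_exp]
          have h2 : (c' * y).re = c'.re * y := by simp [Complex.mul_re]
          rw [h2, ← Real.exp_zero]
          exact Real.exp_le_exp.mpr (mul_nonpos_of_nonpos_of_nonneg hc' (le_of_lt hy))
        calc ‖g y‖ * ‖Complex.exp (c' * y)‖ ≤ ‖g y‖ * 1 :=
              mul_le_mul_of_nonneg_left h1 (norm_nonneg _)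
          _ = ‖g y‖ := mul_one _
    have inner : ∀ y ∈ Ioi (0:ℝ), (∫ s, Φ k (s, y) ∂μ)
        = (g y * Complex.exp (Complex.I * k * y)) / c
            - (g y * Complex.exp (Complex.I * (Complex.I * kj) * y)) / c := by
      intro y hy
      have hy' : (0:ℝ) < y := hy
      have hfun : (fun s => Φ k (s, y)) = Set.indicator (Iio y)
          (fun s => g y * (Real.exp (-(kj * y)) : ℝ) * Complex.exp (c * s)) := by
        funext s
        by_cases h : s < y
        · rw [Set.indicator_of_mem (mem_Iio.mpr h)]
          simp only [hΦ, if_pos h]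
          rw [mul_assoc (g y), mul_assoc (g y), Complex.ofReal_exp, Complex.ofReal_exp,
            ← Complex.exp_add, ← Complex.exp_add]
          congr 2
          rw [hcdef]; push_cast; ring
        · rw [Set.indicator_of_notMem (by simpa using h)]
          simp [hΦ, h]
      rw [hfun, hμ, integral_indicator measurableSet_Iio,
        Measure.restrict_restrict measurableSet_Iio, Iio_inter_Ioi]
      rw [integral_const_mul]
      have hev : ∫ s in Ioo (0:ℝ) y, Complex.exp (c * s)
          = (Complex.exp (c * y) - 1) / c := by
        rw [← integral_Ioc_eq_integral_Ioo, ← intervalIntegral.integral_of_le hy'.le,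
          integral_exp_mul_complex (hc k)]
        simp [hcdef]
      rw [hev]
      have h1 : ((Real.exp (-(kj * y)) : ℝ) : ℂ) * Complex.exp (c * y)
          = Complex.exp (Complex.I * k * y) := by
        rw [Complex.ofReal_exp, ← Complex.exp_add]
        congr 1; rw [hcdef]; push_cast; ring
      have h2 : ((Real.exp (-(kj * y)) : ℝ) : ℂ)
          = Complex.exp (Complex.I * (Complex.I * kj) * y) := by
        rw [Complex.ofReal_exp]
        congr 1
        rw [show Complex.I * (Complex.I * (kj:ℂ)) * (y:ℂ)
            = (Complex.I * Complex.I) * ((kj:ℂ) * y) by ring, Complex.I_mul_I]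
        push_cast; ring
      have h3 : g y * ((Real.exp (-(kj * y)) : ℝ) : ℂ) * ((Complex.exp (c * y) - 1) / c)
          = (g y * (((Real.exp (-(kj * y)) : ℝ) : ℂ) * Complex.exp (c * y))
              - g y * ((Real.exp (-(kj * y)) : ℝ) : ℂ)) / c := by
        ring
      rw [h3, h1, h2]
      ring
    have swap : (∫ s, ∫ y, Φ k (s, y) ∂μ ∂μ) = ∫ y, ∫ s, Φ k (s, y) ∂μ ∂μ :=
      integral_integral_swap (hΦint k)
    have hIk : (Complex.I * (k:ℂ)).re ≤ 0 := by simp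
    have hIkj : (Complex.I * (Complex.I * (kj:ℂ))).re ≤ 0 := by
      simp [Complex.mul_re]; nlinarith
    have hy_int : (∫ y, ∫ s, Φ k (s, y) ∂μ ∂μ)
        = (∫ y, g y * Complex.exp (Complex.I * k * y) ∂μ) / c
            - (∫ y, g y * Complex.exp (Complex.I * (Complex.I * kj) * y) ∂μ) / c := by
      rw [← integral_div, ← integral_div, ← integral_sub
        ((hint_exp (Complex.I * k) hIk).div_const c)
        ((hint_exp (Complex.I * (Complex.I * kj)) hIkj).div_const c)]
      apply integral_congr_ae
      filter_upwards [ae_restrict_mem measurableSet_Ioi] with y hy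
      exact inner y hy
    have hX : (∫ y, g y * Complex.exp (Complex.I * (Complex.I * kj) * y) ∂μ) = -1 :=
      by linear_combination hzero
    have hR : (∫ s in Ioi (0:ℝ),
          (Complex.I * ∫ t in Ioi (0 : ℝ), g (t + s) * Complex.exp (-(kj : ℂ) * t))
            * Complex.exp (Complex.I * k * s))
        = Complex.I * ∫ s, ∫ y, Φ k (s, y) ∂μ ∂μ := by
      rw [← integral_const_mul]
      apply integral_congr_ae
      filter_upwards [ae_restrict_mem measurableSet_Ioi] with s hs
      rw [key0 k s hs]; ring
    rw [hR, swap, hy_int, hX]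
    have hci : c = Complex.I * ((k : ℂ) - Complex.I * kj) := by
      rw [hcdef, mul_sub, ← mul_assoc, Complex.I_mul_I]; ring
    rw [hci]
    field_simp
    ring

/-- Division of a half-plane Fourier transform by a vanishing linear factor:
if `f(k) = 1 + ∫_0^∞ A(y)e^{iky} dy` with `A ∈ L¹(ℝ₊)` and `f(ik_j) = 0`,
then for real `k`, `f(k)/(k - ik_j) = ∫_0^∞ h_j(s) e^{iks} ds` with
`h_j(s) = i ∫_0^∞ A(t+s) e^{-k_j t} dt`, and `h_j ∈ L¹(ℝ₊)`. -/
theorem stmt_16 (A : ℝ → ℝ) (hA : IntegrableOn A (Set.Ioi 0))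
    (kj : ℝ) (hkj : 0 < kj)
    (hzero : 1 + (∫ y in Set.Ioi (0 : ℝ),
      (A y : ℂ) * Complex.exp (Complex.I * (Complex.I * kj) * y)) = 0) :
    IntegrableOn
      (fun s : ℝ => Complex.I * ∫ t in Set.Ioi (0 : ℝ),
        (A (t + s) : ℂ) * Complex.exp (-(kj : ℂ) * t))
      (Set.Ioi 0) ∧
    ∀ k : ℝ,
      (1 + ∫ y in Set.Ioi (0 : ℝ), (A y : ℂ) * Complex.exp (Complex.I * k * y))
          / ((k : ℂ) - Complex.I * kj)
        = ∫ s in Set.Ioi (0 : ℝ),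
            (Complex.I * ∫ t in Set.Ioi (0 : ℝ),
              (A (t + s) : ℂ) * Complex.exp (-(kj : ℂ) * t))
              * Complex.exp (Complex.I * k * s) := by
  have ha : IntegrableOn (fun y => (A y : ℂ)) (Set.Ioi 0) := hA.ofReal
  obtain ⟨g', hg'm, hg'ae⟩ := ha.aestronglyMeasurable
  set g : ℝ → ℂ := Set.indicator (Set.Ioi 0) g' with hgdef
  have hm : Measurable g := hg'm.measurable.indicator measurableSet_Ioi
  have hae : (fun y => (A y : ℂ)) =ᵐ[volume.restrict (Set.Ioi 0)] g := by
    refine hg'ae.trans ?_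
    filter_upwards [ae_restrict_mem measurableSet_Ioi] with y hy
    rw [hgdef]
    exact (Set.indicator_of_mem hy _).symm
  have hg : Integrable g := by
    rw [hgdef, integrable_indicator_iff measurableSet_Ioi]
    exact ha.congr hg'ae
  have hshift : ∀ s : ℝ, 0 ≤ s →
      (fun t => (A (t + s) : ℂ)) =ᵐ[volume.restrict (Set.Ioi 0)] (fun t => g (t + s)) := by
    intro s hs
    have h0 : ∀ᵐ y : ℝ ∂volume, y ∈ Set.Ioi 0 → (A y : ℂ) = g y :=
      (ae_restrict_iff' measurableSet_Ioi).mp hae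
    have h1 : ∀ᵐ t : ℝ ∂volume, t + s ∈ Set.Ioi 0 → (A (t + s) : ℂ) = g (t + s) :=
      (measurePreserving_add_right (volume : Measure ℝ) s).quasiMeasurePreserving.ae h0
    filter_upwards [ae_restrict_of_ae h1, ae_restrict_mem measurableSet_Ioi] with t ht htm
    exact ht (by simp only [Set.mem_Ioi] at htm ⊢; linarith)
  have hinner : ∀ s ∈ Set.Ioi (0:ℝ),
      (∫ t in Set.Ioi (0:ℝ), (A (t + s) : ℂ) * Complex.exp (-(kj:ℂ) * t))
        = ∫ t in Set.Ioi (0:ℝ), g (t + s) * Complex.exp (-(kj:ℂ) * t) := by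
    intro s hs
    exact integral_congr_ae ((hshift s (le_of_lt hs)).mul Filter.EventuallyEq.rfl)
  have houter : ∀ c' : ℂ,
      (∫ y in Set.Ioi (0:ℝ), (A y : ℂ) * Complex.exp (c' * y))
        = ∫ y in Set.Ioi (0:ℝ), g y * Complex.exp (c' * y) := fun c' =>
    integral_congr_ae (hae.mul Filter.EventuallyEq.rfl)
  obtain ⟨hint, heq⟩ := stmt16_core g hm hg kj hkj
    (by rw [← houter (Complex.I * (Complex.I * kj))]; exact hzero)
  constructor
  · apply hint.congr
    filter_upwards [ae_restrict_mem measurableSet_Ioi] with s hs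
    exact (congrArg (fun z => Complex.I * z) (hinner s hs)).symm
  · intro k
    rw [houter (Complex.I * k), heq k]
    apply integral_congr_ae
    filter_upwards [ae_restrict_mem measurableSet_Ioi] with s hs
    rw [hinner s hs]
end
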